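/- arXiv:1902.00230 — 7 statements merged into one kernel-verified Lean document; each statement's English description precedes it below -/
import Mathlib

section
/- For every n ≥ 1, the number of distinct permutations of {1,…,n} obtainable from the identity permutation by a single TDRL operation equals 2^n − n. -/
/-- The TDRL operation with binary pattern `b` applied to a sequence `l`:
concatenate the entries at positions where `b` is `true` (in order)
with the entries at positions where `b` is `false` (in order). -/
def tdrl (b : List Bool) (l : List ℕ) : List ℕ :=
  ((l.zip b).filter (fun p => p.2)).map Prod.fst ++
  ((l.zip b).filter (fun p => !p.2)).map Prod.fst

/-- The mirror-TDRL operation: kept entries of the original copy followed by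
kept entries of the reversed copy. -/
def mtdrl (b : List Bool) (l : List ℕ) : List ℕ :=
  ((l.zip b).filter (fun p => p.2)).map Prod.fst ++
  (((l.zip b).filter (fun p => !p.2)).map Prod.fst).reverse

/-- The identity permutation `(1, 2, …, n)` as a list. -/
def ident (n : ℕ) : List ℕ := List.range' 1 n

/-- `l` is a permutation of `{1, …, n}`. -/
def IsPermOf (n : ℕ) (l : List ℕ) : Prop := l.Perm (ident n)

/-- Permutations obtainable from `π` by one TDRL operation. -/
def SOut (π : List ℕ) : Set (List ℕ) :=
  {ρ | ∃ b : List Bool, b.length = π.length ∧ tdrl b π = ρ}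

/-- Permutations `ρ` from which `π` is obtainable by one TDRL operation. -/
def SIn (π : List ℕ) : Set (List ℕ) :=
  {ρ | ρ.Perm π ∧ ∃ b : List Bool, b.length = ρ.length ∧ tdrl b ρ = π}

/-- Permutations obtainable from `π` by one MTDRL operation. -/
def SMOut (π : List ℕ) : Set (List ℕ) :=
  {ρ | ∃ b : List Bool, b.length = π.length ∧ mtdrl b π = ρ}

/-- Permutations `ρ` from which `π` is obtainable by one MTDRL operation. -/
def SMIn (π : List ℕ) : Set (List ℕ) :=
  {ρ | ρ.Perm π ∧ ∃ b : List Bool, b.length = ρ.length ∧ mtdrl b ρ = π}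

/-- Permutations obtainable from `π` by one bounded TDRL operation of width `k`. -/
def SOutK (k : ℕ) (π : List ℕ) : Set (List ℕ) :=
  {ρ | ∃ i, ∃ b : List Bool, i + k ≤ π.length ∧ b.length = k ∧
    ρ = π.take i ++ tdrl b ((π.drop i).take k) ++ π.drop (i + k)}

/-- Permutations `ρ` from which `π` is obtainable by one bounded TDRL of width `k`. -/
def SInK (k : ℕ) (π : List ℕ) : Set (List ℕ) :=
  {ρ | ρ.Perm π ∧ ∃ i, ∃ b : List Bool, i + k ≤ ρ.length ∧ b.length = k ∧
    π = ρ.take i ++ tdrl b ((ρ.drop i).take k) ++ ρ.drop (i + k)}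

/-- Permutations obtainable from `π` by one bounded MTDRL operation of width `k`. -/
def SMOutK (k : ℕ) (π : List ℕ) : Set (List ℕ) :=
  {ρ | ∃ i, ∃ b : List Bool, i + k ≤ π.length ∧ b.length = k ∧
    ρ = π.take i ++ mtdrl b ((π.drop i).take k) ++ π.drop (i + k)}

/-- Permutations `ρ` from which `π` is obtainable by one bounded MTDRL of width `k`. -/
def SMInK (k : ℕ) (π : List ℕ) : Set (List ℕ) :=
  {ρ | ρ.Perm π ∧ ∃ i, ∃ b : List Bool, i + k ≤ ρ.length ∧ b.length = k ∧
    π = ρ.take i ++ mtdrl b ((ρ.drop i).take k) ++ ρ.drop (i + k)}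

namespace TdrlAux

open List

def tA (b : List Bool) (l : List ℕ) : List ℕ :=
  ((l.zip b).filter (fun p => p.2)).map Prod.fst

def tB (b : List Bool) (l : List ℕ) : List ℕ :=
  ((l.zip b).filter (fun p => !p.2)).map Prod.fst

lemma tdrl_eq (b : List Bool) (l : List ℕ) : tdrl b l = tA b l ++ tB b l := rfl

@[simp] lemma tA_nil (l : List ℕ) : tA [] l = [] := by simp [tA]
@[simp] lemma tA_nil' (b : List Bool) : tA b [] = [] := by simp [tA]
@[simp] lemma tB_nil (l : List ℕ) : tB [] l = [] := by simp [tB]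
@[simp] lemma tB_nil' (b : List Bool) : tB b [] = [] := by simp [tB]

@[simp] lemma tA_cons_true (b : List Bool) (x : ℕ) (l : List ℕ) :
    tA (true :: b) (x :: l) = x :: tA b l := by simp [tA]

@[simp] lemma tA_cons_false (b : List Bool) (x : ℕ) (l : List ℕ) :
    tA (false :: b) (x :: l) = tA b l := by simp [tA]

@[simp] lemma tB_cons_true (b : List Bool) (x : ℕ) (l : List ℕ) :
    tB (true :: b) (x :: l) = tB b l := by simp [tB]

@[simp] lemma tB_cons_false (b : List Bool) (x : ℕ) (l : List ℕ) :
    tB (false :: b) (x :: l) = x :: tB b l := by simp [tB]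

lemma tA_sublist (b : List Bool) (l : List ℕ) (h : b.length = l.length) :
    tA b l <+ l := by
  have h1 : (l.zip b).filter (fun p => p.2) <+ l.zip b := filter_sublist
  have h2 := h1.map Prod.fst
  rwa [map_fst_zip (le_of_eq h.symm)] at h2

lemma tB_sublist (b : List Bool) (l : List ℕ) (h : b.length = l.length) :
    tB b l <+ l := by
  have h1 : (l.zip b).filter (fun p => !p.2) <+ l.zip b := filter_sublist
  have h2 := h1.map Prod.fst
  rwa [map_fst_zip (le_of_eq h.symm)] at h2

lemma tdrl_perm (b : List Bool) (l : List ℕ) (h : b.length = l.length) :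
    (tdrl b l).Perm l := by
  have := (filter_append_perm (fun p : ℕ × Bool => p.2) (l.zip b)).map Prod.fst
  rwa [map_append, map_fst_zip (le_of_eq h.symm)] at this

/-- membership of selected entries -/
lemma mem_tA (b : List Bool) (l : List ℕ) (q : ℕ) (hq : q < l.length)
    (hqb : q < b.length) (hb : b[q] = true) : l[q] ∈ tA b l := by
  have hz : q < (l.zip b).length := by simp [length_zip]; omega
  have hmem : (l[q], b[q]) ∈ l.zip b := by
    have := getElem_mem hz
    rwa [getElem_zip] at this
  unfold tA
  exact mem_map_of_mem (f := Prod.fst) (mem_filter.2 ⟨hmem, by simp [hb]⟩)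

lemma mem_tB (b : List Bool) (l : List ℕ) (q : ℕ) (hq : q < l.length)
    (hqb : q < b.length) (hb : b[q] = false) : l[q] ∈ tB b l := by
  have hz : q < (l.zip b).length := by simp [length_zip]; omega
  have hmem : (l[q], b[q]) ∈ l.zip b := by
    have := getElem_mem hz
    rwa [getElem_zip] at this
  unfold tB
  exact mem_map_of_mem (f := Prod.fst) (mem_filter.2 ⟨hmem, by simp [hb]⟩)

lemma mem_of_mem_tA {b : List Bool} {l : List ℕ} {x : ℕ} (h : x ∈ tA b l) : x ∈ l := by
  simp only [tA, mem_map, mem_filter] at h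
  obtain ⟨p, ⟨hp, _⟩, rfl⟩ := h
  exact (of_mem_zip hp).1

/-- recovering the pattern: if `l` has no duplicates, `tA` determines `b`. -/
lemma recover {l : List ℕ} (hl : l.Nodup) : ∀ {b b' : List Bool},
    b.length = l.length → b'.length = l.length → tA b l = tA b' l → b = b' := by
  induction l with
  | nil =>
    intro b b' hb hb' _
    simp only [length_nil, length_eq_zero_iff] at hb hb'
    rw [hb, hb']
  | cons x t ih =>
    intro b b' hb hb' hA
    match b, b' with
    | c :: b, c' :: b' =>
      simp only [length_cons, Nat.add_right_cancel_iff] at hb hb'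
      have hxt : x ∉ t := (nodup_cons.1 hl).1
      have htn : t.Nodup := (nodup_cons.1 hl).2
      match c, c' with
      | true, true =>
        simp only [tA_cons_true] at hA
        rw [ih htn hb hb' (by exact (cons_inj_right x).mp hA)]
      | false, false =>
        simp only [tA_cons_false] at hA
        rw [ih htn hb hb' hA]
      | true, false =>
        simp only [tA_cons_true, tA_cons_false] at hA
        exact absurd (mem_of_mem_tA (hA ▸ (mem_cons_self : x ∈ x :: tA b t))) hxt
      | false, true =>
        simp only [tA_cons_true, tA_cons_false] at hA
        exact absurd (mem_of_mem_tA (hA.symm ▸ (mem_cons_self : x ∈ x :: tA b' t))) hxt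

/-- `Good b`: pattern has a `false` before a `true`. -/
def Good (b : List Bool) : Prop :=
  ∃ p q : ℕ, p < q ∧ b[p]? = some false ∧ b[q]? = some true

lemma sorted_head_le {B : List ℕ} (h : B.Pairwise (· < ·)) {x : ℕ} (hx : x ∈ B) :
    B.head (ne_nil_of_mem hx) ≤ x := by
  match B with
  | y :: t =>
    rcases mem_cons.1 hx with rfl | hxt
    · exact le_refl _
    · exact le_of_lt ((pairwise_cons.1 h).1 x hxt)

/-- descent lemma: for a good pattern on a sorted list, some element of `tA`
exceeds the head of `tB`. -/
lemma descent {b : List Bool} {l : List ℕ} (hl : l.Pairwise (· < ·))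
    (hlen : b.length = l.length) (hb : Good b) :
    ∃ a ∈ tA b l, ∃ h : tB b l ≠ [], (tB b l).head h < a := by
  obtain ⟨p, q, hpq, hp, hq⟩ := hb
  obtain ⟨hql, hqv⟩ := List.getElem?_eq_some_iff.1 hq
  obtain ⟨hpl, hpv⟩ := List.getElem?_eq_some_iff.1 hp
  have hq' : q < l.length := hlen ▸ hql
  have hp' : p < l.length := hlen ▸ hpl
  have haA : l[q] ∈ tA b l := mem_tA b l q hq' hql hqv
  have hxB : l[p] ∈ tB b l := mem_tB b l p hp' hpl hpv
  have hBs : (tB b l).Pairwise (· < ·) := hl.sublist (tB_sublist b l hlen)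
  have hne : tB b l ≠ [] := ne_nil_of_mem hxB
  refine ⟨l[q], haA, hne, lt_of_le_of_lt (sorted_head_le hBs hxB) ?_⟩
  exact pairwise_iff_getElem.1 hl p q hp' hq' hpq

lemma junction_le {b b' : List Bool} {l : List ℕ} (hl : l.Pairwise (· < ·))
    (hlen : b.length = l.length) (hlen' : b'.length = l.length)
    (hb : Good b) (heq : tdrl b l = tdrl b' l) :
    (tA b l).length ≤ (tA b' l).length := by
  by_contra hlt
  push_neg at hlt
  -- so (tA b' l).length < (tA b l).length; write tA b l = tA b' l ++ C
  set A := tA b l with hA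
  set B := tB b l with hB
  set A' := tA b' l with hA'
  set B' := tB b' l with hB'
  rw [tdrl_eq, tdrl_eq, ← hA, ← hB, ← hA', ← hB'] at heq
  set C := A.drop A'.length with hC
  have hAC : A = A' ++ C := by
    have h1 : A.take A'.length = A' := by
      have h2 := congrArg (fun t => List.take A'.length t) heq
      rw [take_append_of_le_length (le_of_lt hlt), take_left] at h2
      exact h2
    conv_lhs => rw [← take_append_drop A'.length A]
    rw [h1]
  have hBC : B' = C ++ B := by
    have h1 := congrArg (fun t => List.drop A'.length t) heq
    simp only [drop_left] at h1
    rw [drop_append_of_le_length (le_of_lt hlt)] at h1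
    exact h1.symm
  have hCne : C ≠ [] := by
    have : 0 < C.length := by simp [hC]; omega
    exact ne_nil_of_length_pos this
  obtain ⟨a, haA0, hne, hhead0⟩ := descent hl hlen hb
  have haA : a ∈ A := haA0
  have hhead : B.head hne < a := hhead0
  -- head of B equals head of C? No: B' = C ++ B... we need head (tB b l) related.
  -- We have descent for b: a ∈ A, head B < a. a ∈ A = A' ++ C.
  -- a ∈ A. Case a ∈ A' or a ∈ C.
  have hAs : A.Pairwise (· < ·) := hl.sublist (tA_sublist b l hlen)
  have hBs' : B'.Pairwise (· < ·) := hl.sublist (tB_sublist b' l hlen')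
  -- head B ∈ B ⊆ B' (as suffix). In sorted B' = C ++ B, every c ∈ C satisfies c < head B.
  have hheadB : B.head hne ∈ B := head_mem hne
  have hCa : ∀ c ∈ C, c < B.head hne := by
    intro c hc
    have := (pairwise_append.1 (hBC ▸ hBs')).2.2
    exact this c hc _ hheadB
  -- a ∈ A = A' ++ C, and head B < a. If a ∈ A', then since A sorted and C after A',
  have hAa : ∀ x ∈ A', ∀ c ∈ C, x < c := (pairwise_append.1 (hAC ▸ hAs)).2.2
  obtain ⟨c0, hc0⟩ := exists_mem_of_ne_nil C hCne
  rcases mem_append.1 (hAC ▸ haA : a ∈ A' ++ C) with haA' | haC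
  · -- a ∈ A' : a < c0 < head B < a, contradiction
    have h1 : a < c0 := hAa a haA' c0 hc0
    have h2 : c0 < B.head hne := hCa c0 hc0
    omega
  · -- a ∈ C : a < head B but head B < a
    have h2 : a < B.head hne := hCa a haC
    omega

lemma good_inj {b b' : List Bool} {l : List ℕ} (hl : l.Pairwise (· < ·))
    (hlen : b.length = l.length) (hlen' : b'.length = l.length)
    (hb : Good b) (hb' : Good b') (heq : tdrl b l = tdrl b' l) : b = b' := by
  have h1 := junction_le hl hlen hlen' hb heq
  have h2 := junction_le hl hlen' hlen hb' heq.symm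
  have hA : tA b l = tA b' l :=
    (append_inj (by rw [← tdrl_eq, ← tdrl_eq]; exact heq) (le_antisymm h1 h2)).1
  exact recover hl.nodup hlen hlen' hA

lemma good_ne_ident {b : List Bool} {l : List ℕ} (hl : l.Pairwise (· < ·))
    (hlen : b.length = l.length) (hb : Good b) : tdrl b l ≠ l := by
  intro h
  obtain ⟨a, haA, hne, hhead⟩ := descent hl hlen hb
  have hsor : (tA b l ++ tB b l).Pairwise (· < ·) := by rw [← tdrl_eq, h]; exact hl
  have := (pairwise_append.1 hsor).2.2 a haA _ (head_mem hne)
  omega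

/-- canonical bad pattern gives the identity -/
lemma tA_canon (j : ℕ) : ∀ (i : ℕ) (l : List ℕ),
    tA (replicate i true ++ replicate j false) l = l.take i := by
  intro i
  induction i with
  | zero =>
    intro l
    simp only [replicate_zero, nil_append, take_zero]
    induction j generalizing l with
    | zero => simp
    | succ j ih =>
      cases l with
      | nil => simp
      | cons x t => simpa [replicate_succ] using ih t
  | succ i ih =>
    intro l
    cases l with
    | nil => simp
    | cons x t => simpa [replicate_succ] using ih t

lemma tB_canon (j : ℕ) : ∀ (i : ℕ) (l : List ℕ), l.length ≤ i + j →
    tB (replicate i true ++ replicate j false) l = l.drop i := by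
  intro i
  induction i with
  | zero =>
    intro l hl
    simp only [replicate_zero, nil_append, drop_zero]
    induction j generalizing l with
    | zero =>
      simp only [Nat.add_zero, Nat.le_zero, length_eq_zero_iff] at hl
      simp [hl]
    | succ j ih =>
      cases l with
      | nil => simp
      | cons x t =>
        simp only [length_cons] at hl
        simpa [replicate_succ] using ih t (by omega)
  | succ i ih =>
    intro l hl
    cases l with
    | nil => simp
    | cons x t =>
      simp only [length_cons] at hl
      simpa [replicate_succ] using ih t (by omega)

lemma tdrl_canon {i j : ℕ} {l : List ℕ} (h : l.length ≤ i + j) :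
    tdrl (replicate i true ++ replicate j false) l = l := by
  rw [tdrl_eq, tA_canon, tB_canon j i l h, take_append_drop]

/-- bad patterns are canonical -/
lemma not_good_canon : ∀ {b : List Bool}, ¬ Good b →
    b = replicate (b.count true) true ++ replicate (b.count false) false := by
  intro b
  induction b with
  | nil => intro _; simp
  | cons c t ih =>
    intro hng
    cases c with
    | true =>
      have hngt : ¬ Good t := by
        intro ⟨p, q, hpq, hp, hq⟩
        exact hng ⟨p + 1, q + 1, by omega, by simpa using hp, by simpa using hq⟩
      have h1 : count true (true :: t) = count true t + 1 := by simp [count_cons]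
      have h2 : count false (true :: t) = count false t := by simp [count_cons]
      rw [h1, h2, replicate_succ, cons_append]
      exact congrArg (true :: ·) (ih hngt)
    | false =>
      have htf : ∀ x ∈ t, x = false := by
        intro x hx
        by_contra hxt
        have hx' : x = true := by cases x <;> simp_all
        subst hx'
        obtain ⟨q, hq, hqv⟩ := getElem_of_mem hx
        exact hng ⟨0, q + 1, by omega, by simp, by simp [hq, hqv]⟩
      have ht : t = replicate t.length false := eq_replicate_iff.2 ⟨rfl, htf⟩
      have hct : t.count true = 0 := by
        conv_lhs => rw [ht]
        rw [count_replicate]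
        simp
      have hcf : t.count false = t.length := by
        conv_lhs => rw [ht]
        rw [count_replicate]
        simp
      have h1 : count true (false :: t) = 0 := by simp [count_cons, hct]
      have h2 : count false (false :: t) = t.length + 1 := by simp [count_cons, hcf]
      rw [h1, h2, replicate_zero, nil_append, replicate_succ]
      exact congrArg (false :: ·) ht

lemma canon_not_good (i j : ℕ) : ¬ Good (replicate i true ++ replicate j false) := by
  rintro ⟨p, q, hpq, hp, hq⟩
  obtain ⟨hql, hqv⟩ := List.getElem?_eq_some_iff.1 hq
  obtain ⟨hpl, hpv⟩ := List.getElem?_eq_some_iff.1 hp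
  simp only [length_append, length_replicate] at hql hpl
  have hqi : q < i := by
    by_contra hqi
    push_neg at hqi
    rw [getElem_append_right (by simpa using hqi)] at hqv
    simp at hqv
  have hpi : i ≤ p := by
    by_contra hpi
    push_neg at hpi
    rw [getElem_append_left (by simpa using hpi)] at hpv
    simp at hpv
  omega

end TdrlAux

open TdrlAux List

theorem stmt_3 (n : ℕ) (hn : 1 ≤ n) :
    (SOut (ident n)).ncard = 2 ^ n - n := by
  classical
  set l : List ℕ := ident n with hl
  have hlen : l.length = n := by simp [hl, ident]
  have hsort : l.Pairwise (· < ·) := pairwise_lt_range' (s := 1) (n := n)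
  -- the universe of patterns
  set U : Set (List Bool) := {b | b.length = n} with hU
  set G : Set (List Bool) := {b | b.length = n ∧ Good b} with hG
  set Bad : Set (List Bool) := {b | b.length = n ∧ ¬ Good b} with hBad
  have hUfin : U.Finite := by
    have : U ⊆ Set.range (fun f : Fin n → Bool => List.ofFn f) := by
      intro b hb
      have hb' : b.length = n := hb
      exact ⟨fun i => b.get (Fin.cast hb'.symm i), by
        apply List.ext_getElem <;> simp [hb']⟩
    exact (Set.finite_range _).subset this
  have hGU : G ⊆ U := fun b hb => hb.1
  have hBadU : Bad ⊆ U := fun b hb => hb.1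
  have hGfin : G.Finite := hUfin.subset hGU
  have hBadfin : Bad.Finite := hUfin.subset hBadU
  -- SOut = image of tdrl over U
  have hS : SOut l = (fun b => tdrl b l) '' U := by
    ext ρ
    simp only [SOut, Set.mem_setOf_eq, Set.mem_image, hU, hlen]
  have hUsplit : U = Bad ∪ G := by
    ext b; simp only [hU, hBad, hG, Set.mem_setOf_eq, Set.mem_union]
    by_cases h : Good b <;> tauto
  -- image of Bad is {l}
  have hBadImg : (fun b => tdrl b l) '' Bad = {l} := by
    apply Set.eq_singleton_iff_nonempty_unique_mem.2
    constructor
    · refine ⟨tdrl (replicate n true ++ replicate 0 false) l, ?_⟩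
      refine ⟨replicate n true ++ replicate 0 false, ⟨by simp, canon_not_good n 0⟩, rfl⟩
    · rintro ρ ⟨b, ⟨hblen, hbng⟩, rfl⟩
      have hcanon := not_good_canon hbng
      have hcount : b.count true + b.count false = b.length := by
        conv_rhs => rw [hcanon]
        simp
      rw [hcanon]
      exact tdrl_canon (by omega)
  -- injectivity on G
  have hGinj : Set.InjOn (fun b => tdrl b l) G := by
    rintro b ⟨hb1, hb2⟩ b' ⟨hb1', hb2'⟩ heq
    exact good_inj hsort (by omega) (by omega) hb2 hb2' heq
  -- l not in image of G
  have hlni : l ∉ (fun b => tdrl b l) '' G := by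
    rintro ⟨b, ⟨hb1, hb2⟩, heq⟩
    exact good_ne_ident hsort (by omega) hb2 heq
  -- cardinalities
  have hUcard : U.ncard = 2 ^ n := by
    have hUr : U = Set.range (fun f : Fin n → Bool => List.ofFn f) := by
      apply Set.Subset.antisymm
      · intro b hb
        have hb' : b.length = n := hb
        exact ⟨fun i => b.get (Fin.cast hb'.symm i), by
          apply List.ext_getElem <;> simp [hb']⟩
      · rintro b ⟨f, rfl⟩
        exact (by simp : (List.ofFn f).length = n)
    rw [hUr, ← Nat.card_coe_set_eq,
      Nat.card_range_of_injective List.ofFn_injective]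
    simp [Nat.card_eq_fintype_card]
  have hBadcard : Bad.ncard = n + 1 := by
    have hBr : Bad = Set.range (fun i : Fin (n + 1) =>
        replicate (i : ℕ) true ++ replicate (n - (i : ℕ)) false) := by
      ext b
      simp only [hBad, Set.mem_setOf_eq, Set.mem_range]
      constructor
      · rintro ⟨hblen, hbng⟩
        have hcanon := not_good_canon hbng
        have hcount : b.count true + b.count false = b.length := by
          conv_rhs => rw [hcanon]
          simp
        have hnb : n - b.count true = b.count false := by omega
        refine ⟨⟨b.count true, by omega⟩, ?_⟩
        conv_rhs => rw [hcanon]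
        simp [hnb]
      · rintro ⟨i, rfl⟩
        constructor
        · simp; omega
        · exact canon_not_good _ _
    rw [hBr, ← Nat.card_coe_set_eq,
      Nat.card_range_of_injective (fun i i' h => by
        have := congrArg (fun t => List.count true t) h
        simp only [count_append, count_replicate] at this
        simp at this
        exact Fin.ext this)]
    simp [Nat.card_eq_fintype_card]
  have hGcard : G.ncard = 2 ^ n - (n + 1) := by
    have : G = U \ Bad := by
      ext b; simp only [hG, hU, hBad, Set.mem_setOf_eq, Set.mem_diff]; tauto
    rw [this, Set.ncard_diff hBadU hBadfin, hUcard, hBadcard]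
  have hlt : n < 2 ^ n := Nat.lt_two_pow_self
  rw [hS, hUsplit, Set.image_union, hBadImg, Set.ncard_union_eq
    (by simpa [Set.disjoint_singleton_left] using hlni)
    (Set.finite_singleton l) (hGfin.image _),
    Set.ncard_singleton, Set.ncard_image_of_injOn hGinj, hGcard]
  omega
end

section
/- For every n ≥ 1, the number of distinct permutations ρ of {1,…,n} from which the identity permutation can be obtained by a single TDRL operation equals 2^n − n. -/
theorem range'_split (j n : ℕ) (h : j ≤ n) :
    List.range' 1 n = List.range' 1 j ++ List.range' (1+j) (n-j) := by
  have := List.range'_append (s := 1) (m := j) (n := n-j) (step := 1)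
  simp only [Nat.one_mul] at this
  rw [this]; congr 1; omega

def merge : List Bool → List ℕ → List ℕ → List ℕ
  | [], _, _ => []
  | true :: bs, x :: xs, ys => x :: merge bs xs ys
  | true :: bs, [], ys => merge bs [] ys
  | false :: bs, xs, y :: ys => y :: merge bs xs ys
  | false :: bs, xs, [] => merge bs xs []

theorem merge_length (b : List Bool) (xs ys : List ℕ)
    (hx : xs.length = b.count true) (hy : ys.length = b.count false) :
    (merge b xs ys).length = b.length := by
  induction b generalizing xs ys with
  | nil => simp [merge]
  | cons hd tl ih =>
    cases hd
    · cases ys with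
      | nil => simp [List.count_cons] at hy
      | cons y ys => simp_all [merge, List.count_cons]
    · cases xs with
      | nil => simp [List.count_cons] at hx
      | cons x xs => simp_all [merge, List.count_cons]

theorem merge_parts (b : List Bool) (xs ys : List ℕ)
    (hx : xs.length = b.count true) (hy : ys.length = b.count false) :
    (((merge b xs ys).zip b).filter (fun p => p.2)).map Prod.fst = xs ∧
    (((merge b xs ys).zip b).filter (fun p => !p.2)).map Prod.fst = ys := by
  induction b generalizing xs ys with
  | nil =>
    simp [List.count_nil] at hx hy
    subst hx; subst hy; simp [merge]
  | cons hd tl ih =>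
    cases hd
    · cases ys with
      | nil => simp [List.count_cons] at hy
      | cons y ys =>
        have := ih xs ys (by simpa [List.count_cons] using hx)
          (by simpa [List.count_cons] using hy)
        simp [merge, List.zip_cons_cons, List.filter_cons, this]
    · cases xs with
      | nil => simp [List.count_cons] at hx
      | cons x xs =>
        have := ih xs ys (by simpa [List.count_cons] using hx)
          (by simpa [List.count_cons] using hy)
        simp [merge, List.zip_cons_cons, List.filter_cons, this]

theorem tdrl_merge (b : List Bool) (xs ys : List ℕ)
    (hx : xs.length = b.count true) (hy : ys.length = b.count false) :
    tdrl b (merge b xs ys) = xs ++ ys := by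
  have := merge_parts b xs ys hx hy
  simp [tdrl, this.1, this.2]

theorem merge_unmerge (b : List Bool) (l : List ℕ) (h : b.length = l.length) :
    merge b (((l.zip b).filter (fun p => p.2)).map Prod.fst)
      (((l.zip b).filter (fun p => !p.2)).map Prod.fst) = l := by
  induction b generalizing l with
  | nil =>
    have : l = [] := by cases l <;> simp_all
    subst this; simp [merge]
  | cons hd tl ih =>
    cases l with
    | nil => simp at h
    | cons x l =>
      have ihl := ih l (by simpa using h)
      cases hd <;>
        simp_all [List.zip, List.zip_cons_cons, List.filter_cons, merge]

theorem tdrl_left_length (b : List Bool) (l : List ℕ) (h : b.length = l.length) :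
    (((l.zip b).filter (fun p => p.2)).map Prod.fst).length = b.count true := by
  induction b generalizing l with
  | nil => simp
  | cons hd tl ih =>
    cases l with
    | nil => simp at h
    | cons x l =>
      cases hd <;>
        simp [List.zip_cons_cons, List.filter_cons, List.count_cons, ih l (by simpa using h)]

theorem tdrl_perm (b : List Bool) (l : List ℕ) (h : l.length ≤ b.length) :
    (tdrl b l).Perm l := by
  have h1 : (l.zip b).map Prod.fst = l := List.map_fst_zip (l₁ := l) (l₂ := b) h
  have h2 := (List.filter_append_perm (fun p => p.2) (l.zip b)).map Prod.fst
  rw [List.map_append, h1] at h2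
  exact h2

theorem merge_perm (b : List Bool) (xs ys : List ℕ)
    (hx : xs.length = b.count true) (hy : ys.length = b.count false) :
    (merge b xs ys).Perm (xs ++ ys) := by
  have h1 := tdrl_merge b xs ys hx hy
  have h2 := tdrl_perm b (merge b xs ys)
    (le_of_eq (merge_length b xs ys hx hy))
  rw [h1] at h2
  exact h2.symm

theorem merge_sublist_left (b : List Bool) (xs ys : List ℕ)
    (hx : xs.length = b.count true) :
    xs.Sublist (merge b xs ys) := by
  induction b generalizing xs ys with
  | nil =>
    simp [List.count_nil] at hx
    cases xs <;> simp_all [merge]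
  | cons hd tl ih =>
    cases hd
    · cases ys with
      | nil =>
        cases xs with
        | nil => simp
        | cons x xs => exact ih _ _ (by simpa [List.count_cons] using hx)
      | cons y ys =>
        have := ih xs ys (by simpa [List.count_cons] using hx)
        exact List.Sublist.trans this (by simp [merge])
    · cases xs with
      | nil => simp [List.count_cons] at hx
      | cons x xs =>
        have := ih xs ys (by simpa [List.count_cons] using hx)
        simpa [merge] using this.cons₂ x

theorem merge_sublist_right (b : List Bool) (xs ys : List ℕ)
    (hy : ys.length = b.count false) :
    ys.Sublist (merge b xs ys) := by
  induction b generalizing xs ys with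
  | nil =>
    simp [List.count_nil] at hy
    cases ys <;> simp_all [merge]
  | cons hd tl ih =>
    cases hd
    · cases ys with
      | nil => simp [List.count_cons] at hy
      | cons y ys =>
        have := ih xs ys (by simpa [List.count_cons] using hy)
        simpa [merge] using this.cons₂ y
    · cases xs with
      | nil =>
        cases ys with
        | nil => simp
        | cons y ys => exact ih _ _ (by simpa [List.count_cons] using hy)
      | cons x xs =>
        have := ih xs ys (by simpa [List.count_cons] using hy)
        exact List.Sublist.trans this (by simp [merge])

theorem merge_recover (j : ℕ) (b : List Bool) (xs ys : List ℕ)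
    (hx : xs.length = b.count true) (hy : ys.length = b.count false)
    (hxs : ∀ x ∈ xs, x ≤ j) (hys : ∀ y ∈ ys, ¬ y ≤ j) :
    (merge b xs ys).map (fun x => decide (x ≤ j)) = b := by
  induction b generalizing xs ys with
  | nil => simp [merge]
  | cons hd tl ih =>
    cases hd
    · cases ys with
      | nil => simp [List.count_cons] at hy
      | cons y ys =>
        have := ih xs ys (by simpa [List.count_cons] using hx)
          (by simpa [List.count_cons] using hy)
          hxs (fun z hz => hys z (List.mem_cons_of_mem _ hz))
        simp [merge, this, hys y (List.mem_cons_self (a := y) (l := ys))]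
    · cases xs with
      | nil => simp [List.count_cons] at hx
      | cons x xs =>
        have := ih xs ys (by simpa [List.count_cons] using hx)
          (by simpa [List.count_cons] using hy)
          (fun z hz => hxs z (List.mem_cons_of_mem _ hz)) hys
        simp [merge, this, hxs x (List.mem_cons_self (a := x) (l := xs))]

theorem pair_indexOf (l : List ℕ) (a c : ℕ) (hs : [a, c].Sublist l)
    (hn : l.Nodup) : l.idxOf a < l.idxOf c := by
  induction l with
  | nil => simp at hs
  | cons x l ih =>
    have hnl := List.Nodup.of_cons hn
    have hx : x ∉ l := (List.nodup_cons.mp hn).1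
    cases hs with
    | cons _ h =>
      have ha : a ∈ l := h.subset (by simp)
      have hc : c ∈ l := h.subset (by simp)
      have hxa : x ≠ a := fun e => hx (e ▸ ha)
      have hxc : x ≠ c := fun e => hx (e ▸ hc)
      rw [List.idxOf_cons_ne _ (by simpa using hxa),
        List.idxOf_cons_ne _ (by simpa using hxc)]
      exact Nat.succ_lt_succ (ih h hnl)
    | cons_cons _ h =>
      have hc : c ∈ l := h.subset (by simp)
      have hxc : a ≠ c := fun e => hx (e ▸ hc)
      rw [List.idxOf_cons_self, List.idxOf_cons_ne _ (by simpa using hxc)]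
      exact Nat.succ_pos _

theorem pair_sublist_range' (a n v : ℕ) (h1 : a ≤ v) (h2 : v + 2 ≤ a + n) :
    [v, v+1].Sublist (List.range' a n) := by
  have e1 : List.range' a n = List.range' a (v-a) ++ List.range' v (n-(v-a)) := by
    have := List.range'_append (s := a) (m := v-a) (n := n-(v-a)) (step := 1)
    simp only [Nat.one_mul] at this
    rw [show a + (v-a) = v by omega] at this
    rw [this]; congr 1; omega
  have e2 : List.range' v (n-(v-a)) =
      List.range' v 2 ++ List.range' (v+2) (n-(v-a)-2) := by
    have := List.range'_append (s := v) (m := 2) (n := n-(v-a)-2) (step := 1)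
    simp only [Nat.one_mul] at this
    rw [this]; congr 1; omega
  have e3 : List.range' v 2 = [v, v+1] := by
    simp [List.range'_succ]
  rw [e1, e2, e3]
  exact ((List.sublist_append_left _ _).trans (List.sublist_append_right _ _))

theorem eq_range'_of_two_sublists (n m k : ℕ) (l : List ℕ)
    (hp : l.Perm (List.range' 1 n)) (h1 : (List.range' 1 m).Sublist l)
    (h2 : (List.range' k (n+1-k)).Sublist l) (hk1 : 1 ≤ k) (hkm : k ≤ m) :
    l = List.range' 1 n := by
  have hmn : m ≤ n := by
    have := h1.length_le
    simp [hp.length_eq] at this ⊢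
    omega
  have hlen : l.length = n := by simp [hp.length_eq]
  have hnodup : l.Nodup := hp.nodup_iff.mpr (List.nodup_range' (s := 1) (n := n))
  have key : ∀ v, 1 ≤ v → v < n → l.idxOf v < l.idxOf (v+1) := by
    intro v hv1 hvn
    by_cases hc : v + 1 ≤ m
    · exact pair_indexOf l v (v+1)
        (((pair_sublist_range' 1 m v hv1 (by omega)).trans h1)) hnodup
    · exact pair_indexOf l v (v+1)
        (((pair_sublist_range' k (n+1-k) v (by omega) (by omega)).trans h2)) hnodup
  have hmem : ∀ i, i < n → (i+1) ∈ l := by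
    intro i hi
    rw [hp.mem_iff, List.mem_range'_1]
    omega
  have hub : ∀ i, i < n → l.idxOf (i+1) < n := by
    intro i hi
    have := List.idxOf_lt_length_iff.mpr (hmem i hi)
    omega
  have mono : ∀ i, i + 1 < n → l.idxOf (i+1) < l.idxOf (i+1+1) := by
    intro i hi
    exact key (i+1) (by omega) hi
  have step : ∀ d i, i + d < n → l.idxOf (i+1) + d ≤ l.idxOf (i+d+1) := by
    intro d
    induction d with
    | zero => intro i _; simp
    | succ d ih =>
      intro i hi
      have h1 := ih i (by omega)
      have h2 := mono (i+d) (by omega)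
      rw [show i + (d+1) + 1 = (i+d) + 1 + 1 by omega]
      omega
  have hge : ∀ i, i < n → i ≤ l.idxOf (i+1) := by
    intro i hi
    have := step i 0 (by omega)
    rw [show 0 + i + 1 = i + 1 by omega] at this
    omega
  have hle : ∀ i, i < n → l.idxOf (i+1) ≤ i := by
    intro i hi
    have h1 := step (n-1-i) i (by omega)
    rw [show i + (n-1-i) + 1 = (n-1) + 1 by omega] at h1
    have h2 := hub (n-1) (by omega)
    omega
  have hfi : ∀ i, i < n → l.idxOf (i+1) = i := by
    intro i hi
    have := hge i hi
    have := hle i hi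
    omega
  apply List.ext_getElem (by simp [hlen])
  intro i hi hi2
  have hi' : i < n := by omega
  have h3 : l.idxOf (i+1) < l.length := List.idxOf_lt_length_iff.mpr (hmem i hi')
  have h4 : l[l.idxOf (i+1)]? = some (i+1) := by
    rw [List.getElem?_eq_getElem h3, List.getElem_idxOf h3]
  rw [hfi i hi'] at h4
  rw [List.getElem?_eq_getElem hi] at h4
  have h6 : l[i] = i + 1 := Option.some.inj h4
  rw [List.getElem_range', h6]
  omega

theorem count_tf (b : List Bool) : b.count true + b.count false = b.length := by
  induction b with
  | nil => simp
  | cons hd tl ih => cases hd <;> simp [List.count_cons] <;> omega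

def gmap (n : ℕ) (b : List Bool) : List ℕ :=
  merge b (List.range' 1 (b.count true)) (List.range' (1 + b.count true) (n - b.count true))

theorem gmap_lens {n : ℕ} {b : List Bool} (hb : b.length = n) :
    (List.range' 1 (b.count true)).length = b.count true ∧
    (List.range' (1 + b.count true) (n - b.count true)).length = b.count false := by
  have h1 := count_tf b
  refine ⟨by simp, ?_⟩
  simp only [List.length_range']
  omega

theorem count_le {n : ℕ} {b : List Bool} (hb : b.length = n) : b.count true ≤ n := by
  have := List.count_le_length (a := true) (l := b)
  omega

theorem tdrl_gmap {n : ℕ} {b : List Bool} (hb : b.length = n) :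
    tdrl b (gmap n b) = ident n := by
  obtain ⟨hx, hy⟩ := gmap_lens hb
  rw [gmap, tdrl_merge _ _ _ hx hy, ident]
  exact (range'_split _ n (count_le hb)).symm

theorem gmap_length {n : ℕ} {b : List Bool} (hb : b.length = n) : (gmap n b).length = n := by
  obtain ⟨hx, hy⟩ := gmap_lens hb
  rw [gmap, merge_length _ _ _ hx hy, hb]

theorem ident_length (n : ℕ) : (ident n).length = n := by simp [ident]

theorem gmap_mem {n : ℕ} {b : List Bool} (hb : b.length = n) : gmap n b ∈ SIn (ident n) := by
  have hperm := tdrl_perm b (gmap n b) (le_of_eq ((gmap_length hb).trans hb.symm))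
  rw [tdrl_gmap hb] at hperm
  exact ⟨hperm.symm, b, by rw [gmap_length hb, hb], tdrl_gmap hb⟩

theorem gmap_surj {n : ℕ} {ρ : List ℕ} (h : ρ ∈ SIn (ident n)) :
    ∃ b, b.length = n ∧ gmap n b = ρ := by
  obtain ⟨hperm, b, hb, htdrl⟩ := h
  have hρ : ρ.length = n := by rw [hperm.length_eq, ident_length]
  have hbn : b.length = n := by rw [hb, hρ]
  refine ⟨b, hbn, ?_⟩
  have hA : (((ρ.zip b).filter (fun p => p.2)).map Prod.fst).length = b.count true :=
    tdrl_left_length b ρ (by omega)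
  have hAB : (((ρ.zip b).filter (fun p => p.2)).map Prod.fst) ++
      (((ρ.zip b).filter (fun p => !p.2)).map Prod.fst) = ident n := htdrl
  rw [ident, range'_split (b.count true) n (count_le hbn)] at hAB
  obtain ⟨e1, e2⟩ := List.append_inj hAB (by simp [hA])
  have := merge_unmerge b ρ (by omega)
  rw [gmap, ← e1, ← e2]
  exact this

def mono (n j : ℕ) : List Bool := List.replicate j true ++ List.replicate (n - j) false

theorem mono_count (n j : ℕ) : (mono n j).count true = j := by
  simp [mono, List.count_append, List.count_replicate]

theorem mono_length (n j : ℕ) (h : j ≤ n) : (mono n j).length = n := by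
  simp [mono]; omega

theorem merge_mono_false (m : ℕ) (ys : List ℕ) (hy : ys.length = m) :
    merge (List.replicate m false) [] ys = ys := by
  induction m generalizing ys with
  | zero =>
    cases ys with
    | nil => simp [merge]
    | cons y ys => simp at hy
  | succ m ih =>
    cases ys with
    | nil => simp at hy
    | cons y ys => simp [List.replicate_succ, merge, ih ys (by simpa using hy)]

theorem merge_mono (j m : ℕ) (xs ys : List ℕ) (hx : xs.length = j) (hy : ys.length = m) :
    merge (List.replicate j true ++ List.replicate m false) xs ys = xs ++ ys := by
  induction j generalizing xs with
  | zero =>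
    cases xs with
    | nil => simpa [merge] using merge_mono_false m ys hy
    | cons x xs => simp at hx
  | succ j ih =>
    cases xs with
    | nil => simp at hx
    | cons x xs => simp [List.replicate_succ, merge, ih xs (by simpa using hx)]

theorem gmap_mono (n j : ℕ) (h : j ≤ n) : gmap n (mono n j) = ident n := by
  rw [gmap, mono_count, mono,
    merge_mono j (n - j) _ _ (by simp) (by simp [List.length_range']), ident]
  exact (range'_split j n h).symm

theorem gmap_recover {n : ℕ} (b : List Bool) (hb : b.length = n) :
    b = (gmap n b).map (fun x => decide (x ≤ b.count true)) := by
  obtain ⟨hx, hy⟩ := gmap_lens hb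
  refine (merge_recover (b.count true) b _ _ hx hy ?_ ?_).symm
  · intro x hx'; rw [List.mem_range'_1] at hx'; omega
  · intro y hy'; rw [List.mem_range'_1] at hy'; omega

theorem map_ident (n j : ℕ) (h : j ≤ n) :
    (ident n).map (fun x => decide (x ≤ j)) = mono n j := by
  rw [ident, range'_split j n h, List.map_append, mono]
  congr 1
  · refine List.eq_replicate_iff.mpr ⟨by simp, ?_⟩
    intro x hx
    simp only [List.mem_map, List.mem_range'_1] at hx
    obtain ⟨a, ⟨h1, h2⟩, rfl⟩ := hx
    simp; omega
  · refine List.eq_replicate_iff.mpr ⟨by simp, ?_⟩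
    intro x hx
    simp only [List.mem_map, List.mem_range'_1] at hx
    obtain ⟨a, ⟨h1, h2⟩, rfl⟩ := hx
    simp; omega

theorem gmap_eq_ident {n : ℕ} {b : List Bool} (hb : b.length = n) (h : gmap n b = ident n) :
    b = mono n (b.count true) := by
  conv_lhs => rw [gmap_recover b hb, h, map_ident n _ (count_le hb)]

theorem gmap_ident_of_lt {n : ℕ} {b b' : List Bool} (hb : b.length = n) (hb' : b'.length = n)
    (he : gmap n b = gmap n b') (hlt : b.count true < b'.count true) :
    gmap n b = ident n := by
  obtain ⟨hx, hy⟩ := gmap_lens hb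
  obtain ⟨hx', hy'⟩ := gmap_lens hb'
  have hj' : b'.count true ≤ n := count_le hb'
  have hs1 : (List.range' (1 + b.count true) (n - b.count true)).Sublist (gmap n b) :=
    merge_sublist_right _ _ _ hy
  have hs2 : (List.range' 1 (b'.count true)).Sublist (gmap n b) := by
    rw [he]; exact merge_sublist_left _ _ _ hx'
  have hperm : (gmap n b).Perm (List.range' 1 n) := by
    have := merge_perm b _ _ hx hy
    rwa [← range'_split (b.count true) n (count_le hb)] at this
  have hsub : (List.range' (b.count true + 1) (n + 1 - (b.count true + 1))).Sublist (gmap n b) := by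
    have e : List.range' (b.count true + 1) (n + 1 - (b.count true + 1)) =
        List.range' (1 + b.count true) (n - b.count true) := by
      congr 1 <;> omega
    rw [e]; exact hs1
  have := eq_range'_of_two_sublists n (b'.count true) (b.count true + 1) (gmap n b)
    hperm hs2 hsub (by omega) (by omega)
  rw [ident]; exact this

theorem gmap_count_inj {n : ℕ} {b b' : List Bool} (hb : b.length = n) (hb' : b'.length = n)
    (hc : b.count true = b'.count true) (he : gmap n b = gmap n b') : b = b' := by
  rw [gmap_recover b hb, gmap_recover b' hb', he, hc]

theorem gmap_inj {n : ℕ} {b b' : List Bool} (hb : b.length = n) (hb' : b'.length = n)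
    (he : gmap n b = gmap n b') (hni : gmap n b ≠ ident n) : b = b' := by
  rcases lt_trichotomy (b.count true) (b'.count true) with h | h | h
  · exact absurd (gmap_ident_of_lt hb hb' he h) hni
  · exact gmap_count_inj hb hb' h he
  · exact absurd (he.trans (gmap_ident_of_lt hb' hb he.symm h)) hni

theorem stmt_4 (n : ℕ) (hn : 1 ≤ n) :
    (SIn (ident n)).ncard = 2 ^ n - n := by
  classical
  set Dfin : Finset (List Bool) :=
    (Finset.univ : Finset (Fin n → Bool)).image (fun f => List.ofFn f) with hD
  have hDmem : ∀ b : List Bool, b ∈ Dfin ↔ b.length = n := by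
    intro b
    simp only [hD, Finset.mem_image, Finset.mem_univ, true_and]
    constructor
    · rintro ⟨f, rfl⟩; simp
    · intro hb
      refine ⟨fun i => b.get ⟨i, by omega⟩, ?_⟩
      apply List.ext_getElem (by simp [hb])
      intro i h1 h2
      simp [List.getElem_ofFn]
  have hDcard : Dfin.card = 2 ^ n := by
    rw [hD, Finset.card_image_of_injective _ (List.ofFn_injective)]
    simp
  set Mfin : Finset (List Bool) := (Finset.range (n + 1)).image (fun j => mono n j) with hM
  have hMcard : Mfin.card = n + 1 := by
    rw [hM, Finset.card_image_of_injOn, Finset.card_range]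
    intro a ha b hb' hab
    have := congrArg (List.count true) hab
    rwa [mono_count, mono_count] at this
  have hMD : Mfin ⊆ Dfin := by
    intro b hbM
    rw [hDmem]
    simp only [hM, Finset.mem_image, Finset.mem_range] at hbM
    obtain ⟨j, hj, rfl⟩ := hbM
    exact mono_length n j (by omega)
  have hMmem : ∀ b : List Bool, b.length = n → gmap n b = ident n → b ∈ Mfin := by
    intro b hb hid
    have := gmap_eq_ident hb hid
    rw [hM]
    simp only [Finset.mem_image, Finset.mem_range]
    exact ⟨b.count true, by have := count_le hb; omega, this.symm⟩
  have hSeq : SIn (ident n) = (fun b => gmap n b) '' ↑(Dfin \ Mfin) ∪ {ident n} := by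
    ext ρ
    constructor
    · intro hρ
      obtain ⟨b, hb, rfl⟩ := gmap_surj hρ
      by_cases hbi : gmap n b = ident n
      · right; simp [hbi]
      · left
        refine ⟨b, ?_, rfl⟩
        simp only [Finset.coe_sdiff, Set.mem_diff, Finset.mem_coe]
        refine ⟨(hDmem b).mpr hb, fun hbM => ?_⟩
        simp only [hM, Finset.mem_image, Finset.mem_range] at hbM
        obtain ⟨j, hj, rfl⟩ := hbM
        exact hbi (gmap_mono n j (by omega))
    · intro hρ
      rcases hρ with ⟨b, hbD, rfl⟩ | hρ
      · simp only [Finset.coe_sdiff, Set.mem_diff, Finset.mem_coe] at hbD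
        exact gmap_mem ((hDmem b).mp hbD.1)
      · simp only [Set.mem_singleton_iff] at hρ
        subst hρ
        have := gmap_mem (mono_length n n le_rfl)
        rwa [gmap_mono n n le_rfl] at this
  rw [hSeq]
  have hfin1 : ((fun b => gmap n b) '' ↑(Dfin \ Mfin)).Finite :=
    (Dfin \ Mfin).finite_toSet.image _
  have hdisj : Disjoint ((fun b => gmap n b) '' ↑(Dfin \ Mfin)) {ident n} := by
    rw [Set.disjoint_singleton_right]
    rintro ⟨b, hbmem, hbid⟩
    simp only [Finset.coe_sdiff, Set.mem_diff, Finset.mem_coe] at hbmem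
    exact hbmem.2 (hMmem b ((hDmem b).mp hbmem.1) hbid)
  rw [Set.ncard_union_eq hdisj hfin1 (Set.finite_singleton _)]
  have hinj : Set.InjOn (fun b => gmap n b) ↑(Dfin \ Mfin) := by
    intro b hb b' hb' he
    simp only [Finset.coe_sdiff, Set.mem_diff, Finset.mem_coe] at hb hb'
    refine gmap_inj ((hDmem b).mp hb.1) ((hDmem b').mp hb'.1) he (fun hid => ?_)
    exact hb.2 (hMmem b ((hDmem b).mp hb.1) hid)
  rw [Set.ncard_image_of_injOn hinj, Set.ncard_coe_finset, Finset.card_sdiff_of_subset hMD,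
    hDcard, hMcard, Set.ncard_singleton]
  have h2n : n + 1 ≤ 2 ^ n := Nat.lt_two_pow_self (n := n)
  omega
end

section
/- For every n ≥ 1, the number of permutations ρ of {1,…,n} such that ρ is obtainable from the identity by a single TDRL operation and the identity is obtainable from ρ by a single TDRL operation equals 1 + C(n,2) + C(n,3). -/
private lemma range'_glue (s a b c : ℕ) (h : a + b = c) :
    List.range' s a ++ List.range' (s + a) b = List.range' s c := by
  have h2 := List.range'_append (s := s) (m := a) (n := b) (step := 1)
  simp only [one_mul] at h2
  rw [h2]
  congr 1

private lemma tdrl_map (P : ℕ → Bool) (l : List ℕ) :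
    tdrl (l.map P) l = l.filter P ++ l.filter (fun x => !P x) := by
  have hz : l.zip (l.map P) = l.map (fun x => (x, P x)) := by
    have := List.zip_map' (f := (id : ℕ → ℕ)) (g := P) (l := l)
    simpa using this
  unfold tdrl
  rw [hz, List.filter_map, List.filter_map, List.map_map, List.map_map]
  congr 1 <;> simp [Function.comp_def]

private lemma tdrl_sublist (p : ℕ × Bool → Bool) (l : List ℕ) (b : List Bool)
    (h : l.length ≤ b.length) :
    (((l.zip b).filter p).map Prod.fst).Sublist l := by
  have h1 : ((l.zip b).filter p).Sublist (l.zip b) := List.filter_sublist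
  have h2 := h1.map Prod.fst
  rwa [List.map_fst_zip h] at h2

private lemma filter_range'_true (P : ℕ → Bool) (s a : ℕ)
    (h : ∀ x, s ≤ x → x < s + a → P x = true) :
    (List.range' s a).filter P = List.range' s a :=
  List.filter_eq_self.2 fun x hx =>
    h x (List.mem_range'_1.1 hx).1 (List.mem_range'_1.1 hx).2

private lemma filter_range'_false (P : ℕ → Bool) (s a : ℕ)
    (h : ∀ x, s ≤ x → x < s + a → P x = false) :
    (List.range' s a).filter P = [] := by
  rw [List.filter_eq_nil_iff]
  intro x hx
  have h2 := List.mem_range'_1.1 hx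
  simp [h x h2.1 h2.2]

private lemma start_eq_of_append {s i t j : ℕ} {L M : List ℕ} (hi : 0 < i) (hj : 0 < j)
    (h : List.range' s i ++ L = List.range' t j ++ M) : s = t := by
  obtain ⟨i', rfl⟩ : ∃ i', i = i' + 1 := ⟨i - 1, by omega⟩
  obtain ⟨j', rfl⟩ : ∃ j', j = j' + 1 := ⟨j - 1, by omega⟩
  rw [List.range'_succ, List.range'_succ, List.cons_append, List.cons_append] at h
  exact (List.cons.injEq _ _ _ _ ▸ h).1

private def FF (n : ℕ) (t : ℕ × ℕ × ℕ) : List ℕ :=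
  List.range' 1 t.1 ++ List.range' (t.2.1 + 1) (t.2.2 - t.2.1) ++
  List.range' (t.1 + 1) (t.2.1 - t.1) ++ List.range' (t.2.2 + 1) (n - t.2.2)

private def Pairs (N : ℕ) : Finset (ℕ × ℕ) :=
  (Finset.range N).biUnion fun y => (Finset.range y).image fun x => (x, y)

private def Trip (N : ℕ) : Finset (ℕ × ℕ × ℕ) :=
  (Finset.range N).biUnion fun m => (Pairs m).image fun q => (q.1, q.2, m)

private lemma mem_Pairs {N : ℕ} {q : ℕ × ℕ} : q ∈ Pairs N ↔ q.1 < q.2 ∧ q.2 < N := by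
  obtain ⟨a, b⟩ := q
  simp only [Pairs, Finset.mem_biUnion, Finset.mem_image, Finset.mem_range, Prod.mk.injEq]
  constructor
  · rintro ⟨y, hy, x, hx, h1, h2⟩; omega
  · rintro ⟨h1, h2⟩; exact ⟨b, h2, a, h1, rfl, rfl⟩

private lemma mem_Trip {N : ℕ} {t : ℕ × ℕ × ℕ} :
    t ∈ Trip N ↔ t.1 < t.2.1 ∧ t.2.1 < t.2.2 ∧ t.2.2 < N := by
  obtain ⟨a, b, c⟩ := t
  simp only [Trip, Finset.mem_biUnion, Finset.mem_image, Finset.mem_range]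
  constructor
  · rintro ⟨m, hm, q, hq, heq⟩
    obtain ⟨h1, h2⟩ := mem_Pairs.1 hq
    obtain ⟨rfl, rfl, rfl⟩ : q.1 = a ∧ q.2 = b ∧ m = c := by
      simpa [Prod.ext_iff] using heq
    exact ⟨h1, h2, hm⟩
  · rintro ⟨h1, h2, h3⟩
    exact ⟨c, h3, (a, b), mem_Pairs.2 ⟨h1, h2⟩, rfl⟩

private lemma sum_choose (k N : ℕ) :
    ∑ i ∈ Finset.range N, Nat.choose i k = Nat.choose N (k + 1) := by
  induction N with
  | zero => simp
  | succ N ih =>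
    rw [Finset.sum_range_succ, ih, Nat.choose_succ_succ]
    simp only [Nat.succ_eq_add_one]
    omega

private lemma card_Pairs (N : ℕ) : (Pairs N).card = N.choose 2 := by
  rw [Pairs, Finset.card_biUnion]
  · rw [← sum_choose 1 N]
    refine Finset.sum_congr rfl fun y _ => ?_
    have hinj : Function.Injective (fun x => (x, y) : ℕ → ℕ × ℕ) :=
      fun a b h => by simpa using h
    rw [Finset.card_image_of_injective _ hinj, Finset.card_range, Nat.choose_one_right]
  · intro x _ y _ hxy
    simp only [Finset.disjoint_left, Finset.mem_image, Finset.mem_range]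
    rintro q ⟨a, _, rfl⟩ ⟨b, _, h⟩
    exact hxy (congrArg Prod.snd h).symm

private lemma card_Trip (N : ℕ) : (Trip N).card = N.choose 3 := by
  rw [Trip, Finset.card_biUnion]
  · rw [← sum_choose 2 N]
    refine Finset.sum_congr rfl fun m _ => ?_
    have hinj : Function.Injective (fun q => (q.1, q.2, m) : ℕ × ℕ → ℕ × ℕ × ℕ) :=
      fun a b h => by simpa [Prod.ext_iff] using h
    rw [Finset.card_image_of_injective _ hinj, card_Pairs]
  · intro x _ y _ hxy
    simp only [Finset.disjoint_left, Finset.mem_image]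
    rintro t ⟨a, _, rfl⟩ ⟨b, _, h⟩
    exact hxy (congrArg (fun t => t.2.2) h).symm

private lemma range'_glue' (s a s' b c : ℕ) (h1 : s' = s + a) (h2 : a + b = c) :
    List.range' s a ++ List.range' s' b = List.range' s c := by
  subst h1; exact range'_glue s a b c h2

private lemma ident_split (n p k m : ℕ) (hp : p ≤ k) (hk : k ≤ m) (hm : m ≤ n) :
    ident n = List.range' 1 p ++ (List.range' (p + 1) (k - p) ++
      (List.range' (k + 1) (m - k) ++ List.range' (m + 1) (n - m))) := by
  rw [range'_glue' (k+1) (m-k) (m+1) (n-m) (n-k) (by omega) (by omega),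
      range'_glue' (p+1) (k-p) (k+1) (n-k) (n-p) (by omega) (by omega),
      range'_glue' 1 p (p+1) (n-p) n (by omega) (by omega)]
  rfl

private lemma FF_eq (n p k m : ℕ) :
    FF n (p, k, m) = List.range' 1 p ++ (List.range' (k+1) (m-k) ++
      (List.range' (p+1) (k-p) ++ List.range' (m+1) (n-m))) := by
  simp [FF, List.append_assoc]

private lemma ident_mem (n : ℕ) : ident n ∈ SOut (ident n) ∩ SIn (ident n) := by
  have h : tdrl ((ident n).map (fun _ => true)) (ident n) = ident n := by
    rw [tdrl_map]; simp
  exact ⟨⟨_, by simp, h⟩, List.Perm.refl _, _, by simp, h⟩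

private lemma FF_mem {n p k m : ℕ} (hpk : p < k) (hkm : k < m) (hmn : m ≤ n) :
    FF n (p, k, m) ∈ SOut (ident n) ∩ SIn (ident n) := by
  have hsplit := ident_split n p k m (le_of_lt hpk) (le_of_lt hkm) hmn
  have hFF := FF_eq n p k m
  constructor
  · set P : ℕ → Bool := fun x => decide (x ≤ p ∨ (k < x ∧ x ≤ m)) with hP
    refine ⟨(ident n).map P, by simp, ?_⟩
    rw [tdrl_map]
    conv_lhs => rw [hsplit]
    rw [List.filter_append, List.filter_append, List.filter_append,
        List.filter_append, List.filter_append, List.filter_append,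
        filter_range'_true P 1 p (fun x h1 h2 => by simp [hP]; omega),
        filter_range'_false P (p+1) (k-p) (fun x h1 h2 => by simp [hP]; omega),
        filter_range'_true P (k+1) (m-k) (fun x h1 h2 => by simp [hP]; omega),
        filter_range'_false P (m+1) (n-m) (fun x h1 h2 => by simp [hP]; omega),
        filter_range'_false _ 1 p (fun x h1 h2 => by simp [hP]; omega),
        filter_range'_true _ (p+1) (k-p) (fun x h1 h2 => by simp [hP]; omega),
        filter_range'_false _ (k+1) (m-k) (fun x h1 h2 => by simp [hP]; omega),
        filter_range'_true _ (m+1) (n-m) (fun x h1 h2 => by simp [hP]; omega),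
        hFF]
    simp
  · refine ⟨?_, ?_⟩
    · rw [hFF, hsplit]
      refine List.Perm.append_left _ ?_
      rw [← List.append_assoc, ← List.append_assoc]
      exact List.perm_append_comm.append_right _
    · set Q : ℕ → Bool := fun x => decide (x ≤ k) with hQ
      refine ⟨(FF n (p, k, m)).map Q, by simp, ?_⟩
      rw [tdrl_map]
      conv_lhs => rw [hFF]
      rw [List.filter_append, List.filter_append, List.filter_append,
          List.filter_append, List.filter_append, List.filter_append,
          filter_range'_true Q 1 p (fun x h1 h2 => by simp [hQ]; omega),
          filter_range'_false Q (k+1) (m-k) (fun x h1 h2 => by simp [hQ]; omega),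
          filter_range'_true Q (p+1) (k-p) (fun x h1 h2 => by simp [hQ]; omega),
          filter_range'_false Q (m+1) (n-m) (fun x h1 h2 => by simp [hQ]; omega),
          filter_range'_false _ 1 p (fun x h1 h2 => by simp [hQ]; omega),
          filter_range'_true _ (k+1) (m-k) (fun x h1 h2 => by simp [hQ]; omega),
          filter_range'_false _ (p+1) (k-p) (fun x h1 h2 => by simp [hQ]; omega),
          filter_range'_true _ (m+1) (n-m) (fun x h1 h2 => by simp [hQ]; omega)]
      simp only [List.nil_append, List.append_nil]
      rw [range'_glue' 1 p (p+1) (k-p) k (by omega) (by omega),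
          range'_glue' (k+1) (m-k) (m+1) (n-m) (n-k) (by omega) (by omega),
          range'_glue' 1 k (k+1) (n-k) n (by omega) (by omega)]
      rfl

private lemma forward {n : ℕ} {ρ : List ℕ}
    (h1 : ρ ∈ SOut (ident n)) (h2 : ρ ∈ SIn (ident n)) :
    ρ = ident n ∨ ∃ p k m, p < k ∧ k < m ∧ m ≤ n ∧ ρ = FF n (p, k, m) := by
  obtain ⟨b, hblen, hρ⟩ := h1
  obtain ⟨hperm, c, hclen, hid⟩ := h2
  have hlen_ident : (ident n).length = n := by simp [ident]
  set A : List ℕ := (((ident n).zip b).filter (fun p => p.2)).map Prod.fst with hA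
  set B : List ℕ := (((ident n).zip b).filter (fun p => !p.2)).map Prod.fst with hB
  have hρAB : ρ = A ++ B := by rw [← hρ]; rfl
  have hsubA : A.Sublist (ident n) := tdrl_sublist _ _ _ hblen.ge
  have hsubB : B.Sublist (ident n) := tdrl_sublist _ _ _ hblen.ge
  have hρlen : ρ.length = n := by rw [hperm.length_eq, hlen_ident]
  set C : List ℕ := ((ρ.zip c).filter (fun p => p.2)).map Prod.fst with hC
  set D : List ℕ := ((ρ.zip c).filter (fun p => !p.2)).map Prod.fst with hD
  have hCD : C ++ D = ident n := by rw [← hid]; rfl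
  have hsubC : C.Sublist ρ := tdrl_sublist _ _ _ hclen.ge
  have hsubD : D.Sublist ρ := tdrl_sublist _ _ _ hclen.ge
  set k := C.length with hk
  have hkn : k ≤ n := by have := hsubC.length_le; omega
  have hid_split : ident n = List.range' 1 k ++ List.range' (1+k) (n-k) :=
    (range'_glue' 1 k (1+k) (n-k) n rfl (by omega)).symm
  have hCval : C = List.range' 1 k := by
    have h3 : (C ++ D).take k = C := List.take_left' rfl
    rw [hCD, hid_split, List.take_left' (by simp)] at h3
    exact h3.symm
  have hDval : D = List.range' (1+k) (n-k) := by
    have h3 : (C ++ D).drop k = D := List.drop_left' rfl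
    rw [hCD, hid_split, List.drop_left' (by simp)] at h3
    exact h3.symm
  rw [hCval] at hsubC
  rw [hDval] at hsubD
  set Q : ℕ → Bool := fun x => decide (x ≤ k) with hQ
  have hfid : (ident n).filter Q = List.range' 1 k := by
    rw [hid_split, List.filter_append,
        filter_range'_true Q 1 k (fun x h1 h2 => by simp [hQ]; omega),
        filter_range'_false Q (1+k) (n-k) (fun x h1 h2 => by simp [hQ]; omega),
        List.append_nil]
  have hfid' : (ident n).filter (fun x => !Q x) = List.range' (1+k) (n-k) := by
    rw [hid_split, List.filter_append,
        filter_range'_false _ 1 k (fun x h1 h2 => by simp [hQ]; omega),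
        filter_range'_true _ (1+k) (n-k) (fun x h1 h2 => by simp [hQ]; omega),
        List.nil_append]
  have hρQ : ρ.filter Q = List.range' 1 k := by
    have hs : (List.range' 1 k).Sublist (ρ.filter Q) := by
      have h4 := hsubC.filter Q
      rwa [filter_range'_true Q 1 k (fun x h1 h2 => by simp [hQ]; omega)] at h4
    refine (hs.eq_of_length ?_).symm
    have h5 := (hperm.filter Q).length_eq
    rw [hfid] at h5
    rw [h5]
  have hρQ' : ρ.filter (fun x => !Q x) = List.range' (1+k) (n-k) := by
    have hs : (List.range' (1+k) (n-k)).Sublist (ρ.filter (fun x => !Q x)) := by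
      have h4 := hsubD.filter (fun x => !Q x)
      rwa [filter_range'_true _ (1+k) (n-k) (fun x h1 h2 => by simp [hQ]; omega)] at h4
    refine (hs.eq_of_length ?_).symm
    have h5 := (hperm.filter (fun x => !Q x)).length_eq
    rw [hfid'] at h5
    rw [h5]
  have hABQ : A.filter Q ++ B.filter Q = List.range' 1 k := by
    rw [← List.filter_append, ← hρAB, hρQ]
  have hABQ' : A.filter (fun x => !Q x) ++ B.filter (fun x => !Q x)
      = List.range' (1+k) (n-k) := by
    rw [← List.filter_append, ← hρAB, hρQ']
  set a := (A.filter Q).length with ha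
  have hak : a ≤ k := by
    have := congrArg List.length hABQ; simp at this; omega
  have hsplit1 : List.range' 1 k = List.range' 1 a ++ List.range' (1+a) (k-a) :=
    (range'_glue' 1 a (1+a) (k-a) k rfl (by omega)).symm
  have hAQ : A.filter Q = List.range' 1 a := by
    have h3 : (A.filter Q ++ B.filter Q).take a = A.filter Q := List.take_left' rfl
    rw [hABQ, hsplit1, List.take_left' (by simp)] at h3
    exact h3.symm
  have hBQ : B.filter Q = List.range' (1+a) (k-a) := by
    have h3 : (A.filter Q ++ B.filter Q).drop a = B.filter Q := List.drop_left' rfl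
    rw [hABQ, hsplit1, List.drop_left' (by simp)] at h3
    exact h3.symm
  set d := (A.filter (fun x => !Q x)).length with hd
  have hdnk : d ≤ n - k := by
    have := congrArg List.length hABQ'; simp at this; omega
  have hsplit2 : List.range' (1+k) (n-k)
      = List.range' (1+k) d ++ List.range' (1+k+d) (n-k-d) :=
    (range'_glue' (1+k) d (1+k+d) (n-k-d) (n-k) rfl (by omega)).symm
  have hAQ' : A.filter (fun x => !Q x) = List.range' (1+k) d := by
    have h3 : (A.filter (fun x => !Q x) ++ B.filter (fun x => !Q x)).take d
        = A.filter (fun x => !Q x) := List.take_left' rfl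
    rw [hABQ', hsplit2, List.take_left' (by simp)] at h3
    exact h3.symm
  have hBQ' : B.filter (fun x => !Q x) = List.range' (1+k+d) (n-k-d) := by
    have h3 : (A.filter (fun x => !Q x) ++ B.filter (fun x => !Q x)).drop d
        = B.filter (fun x => !Q x) := List.drop_left' rfl
    rw [hABQ', hsplit2, List.drop_left' (by simp)] at h3
    exact h3.symm
  haveI : IsAntisymm ℕ (· < ·) := ⟨fun _ _ h1 h2 => absurd h2 (lt_asymm h1)⟩
  have hidsort : List.Pairwise (· < ·) (ident n) := List.pairwise_lt_range' (s := 1) (n := n)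
  have hAval : A = List.range' 1 a ++ List.range' (1+k) d := by
    have hperm2 := (List.filter_append_perm Q A).symm
    rw [hAQ, hAQ'] at hperm2
    refine hperm2.eq_of_pairwise' (List.Pairwise.sublist hsubA hidsort)
      (List.pairwise_append.2 ⟨(List.pairwise_lt_range' (s := 1) (n := a)), (List.pairwise_lt_range' (s := 1+k) (n := d)), ?_⟩)
    intro x hx y hy
    have hx' := List.mem_range'_1.1 hx
    have hy' := List.mem_range'_1.1 hy
    omega
  have hBval : B = List.range' (1+a) (k-a) ++ List.range' (1+k+d) (n-k-d) := by
    have hperm2 := (List.filter_append_perm Q B).symm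
    rw [hBQ, hBQ'] at hperm2
    refine hperm2.eq_of_pairwise' (List.Pairwise.sublist hsubB hidsort)
      (List.pairwise_append.2 ⟨(List.pairwise_lt_range' (s := 1+a) (n := k-a)), (List.pairwise_lt_range' (s := 1+k+d) (n := n-k-d)), ?_⟩)
    intro x hx y hy
    have hx' := List.mem_range'_1.1 hx
    have hy' := List.mem_range'_1.1 hy
    omega
  by_cases hcase : a = k ∨ d = 0
  · left
    rcases hcase with hak' | hd0
    · rw [hρAB, hAval, hBval, hak', Nat.sub_self]
      simp only [List.range'_zero, List.nil_append, List.append_assoc]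
      rw [range'_glue' (1+k) d (1+k+d) (n-k-d) (n-k) rfl (by omega),
          range'_glue' 1 k (1+k) (n-k) n rfl (by omega)]
      rfl
    · rw [hρAB, hAval, hBval, hd0]
      simp only [List.range'_zero, List.append_nil, Nat.add_zero, Nat.sub_zero,
        List.append_assoc]
      rw [range'_glue' (1+a) (k-a) (1+k) (n-k) (n-a) (by omega) (by omega),
          range'_glue' 1 a (1+a) (n-a) n rfl (by omega)]
      rfl
  · right
    push_neg at hcase
    refine ⟨a, k, k + d, by omega, by omega, by omega, ?_⟩
    rw [hρAB, hAval, hBval, FF_eq n a k (k+d),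
        show k + d - k = d by omega, show n - (k+d) = n-k-d by omega,
        Nat.add_comm k 1, Nat.add_comm a 1, show k+d+1 = 1+k+d by omega]
    simp [List.append_assoc]

private lemma FF_ne_ident {n p k m : ℕ} (hpk : p < k) (hkm : k < m) (hmn : m ≤ n) :
    FF n (p, k, m) ≠ ident n := by
  intro h
  rw [FF_eq] at h
  rw [show ident n = List.range' 1 p ++ (List.range' (p+1) (n-p) ++ ([] : List ℕ)) by
      rw [List.append_nil, range'_glue' 1 p (p+1) (n-p) n (by omega) (by omega)]; rfl] at h
  have := start_eq_of_append (i := m-k) (j := n-p) (by omega) (by omega)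
    (List.append_cancel_left h)
  omega

private lemma FF_inj {n : ℕ} {p k m p' k' m' : ℕ}
    (h1 : p < k) (h2 : k < m) (h3 : m ≤ n)
    (h1' : p' < k') (h2' : k' < m') (h3' : m' ≤ n)
    (heq : FF n (p, k, m) = FF n (p', k', m')) : p = p' ∧ k = k' ∧ m = m' := by
  rw [FF_eq, FF_eq] at heq
  have hpp : p = p' := by
    rcases Nat.lt_trichotomy p p' with h | h | h
    · exfalso
      rw [show List.range' 1 p' = List.range' 1 p ++ List.range' (p+1) (p'-p) from
          (range'_glue' 1 p (p+1) (p'-p) p' (by omega) (by omega)).symm,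
        List.append_assoc] at heq
      have := start_eq_of_append (i := m-k) (j := p'-p) (by omega) (by omega)
        (List.append_cancel_left heq)
      omega
    · exact h
    · exfalso
      rw [show List.range' 1 p = List.range' 1 p' ++ List.range' (p'+1) (p-p') from
          (range'_glue' 1 p' (p'+1) (p-p') p (by omega) (by omega)).symm,
        List.append_assoc] at heq
      have := start_eq_of_append (i := p-p') (j := m'-k') (by omega) (by omega)
        (List.append_cancel_left heq)
      omega
  subst hpp
  have heq2 := List.append_cancel_left heq
  have hkk : k = k' := by
    have := start_eq_of_append (i := m-k) (j := m'-k') (by omega) (by omega) heq2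
    omega
  subst hkk
  have hmm : m = m' := by
    rcases Nat.lt_trichotomy m m' with h | h | h
    · exfalso
      rw [show List.range' (k+1) (m'-k)
            = List.range' (k+1) (m-k) ++ List.range' (m+1) (m'-m) from
          (range'_glue' (k+1) (m-k) (m+1) (m'-m) (m'-k) (by omega) (by omega)).symm,
        List.append_assoc] at heq2
      have := start_eq_of_append (i := k-p) (j := m'-m) (by omega) (by omega)
        (List.append_cancel_left heq2)
      omega
    · exact h
    · exfalso
      rw [show List.range' (k+1) (m-k)
            = List.range' (k+1) (m'-k) ++ List.range' (m'+1) (m-m') from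
          (range'_glue' (k+1) (m'-k) (m'+1) (m-m') (m-k) (by omega) (by omega)).symm,
        List.append_assoc] at heq2
      have := start_eq_of_append (i := m-m') (j := k-p) (by omega) (by omega)
        (List.append_cancel_left heq2)
      omega
  exact ⟨rfl, rfl, hmm⟩

theorem stmt_7 (n : ℕ) (hn : 1 ≤ n) :
    (SOut (ident n) ∩ SIn (ident n)).ncard = 1 + n.choose 2 + n.choose 3 := by
  classical
  have hset : SOut (ident n) ∩ SIn (ident n)
      = ↑(insert (ident n) ((Trip (n+1)).image (FF n))) := by
    ext ρ
    simp only [Finset.coe_insert, Set.mem_insert_iff, Finset.coe_image, Set.mem_image,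
      Finset.mem_coe]
    constructor
    · intro hρ
      rcases forward hρ.1 hρ.2 with h | ⟨p, k, m, hpk, hkm, hmn, rfl⟩
      · exact Or.inl h
      · exact Or.inr ⟨(p, k, m), mem_Trip.2 (by dsimp only; exact ⟨hpk, hkm, by omega⟩), rfl⟩
    · rintro (rfl | ⟨⟨p, k, m⟩, ht, rfl⟩)
      · exact ident_mem n
      · obtain ⟨hpk, hkm, hmn⟩ := mem_Trip.1 ht
        dsimp only at hpk hkm hmn
        exact FF_mem hpk hkm (by omega)
  have hnotmem : ident n ∉ (Trip (n+1)).image (FF n) := by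
    intro h
    obtain ⟨⟨p, k, m⟩, ht, hFF⟩ := Finset.mem_image.1 h
    obtain ⟨hpk, hkm, hmn⟩ := mem_Trip.1 ht
    dsimp only at hpk hkm hmn
    exact FF_ne_ident hpk hkm (by omega) hFF
  have hinj : Set.InjOn (FF n) ↑(Trip (n+1)) := by
    rintro ⟨p, k, m⟩ ht ⟨p', k', m'⟩ ht' heq
    obtain ⟨hpk, hkm, hmn⟩ := mem_Trip.1 (Finset.mem_coe.1 ht)
    obtain ⟨hpk', hkm', hmn'⟩ := mem_Trip.1 (Finset.mem_coe.1 ht')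
    dsimp only at hpk hkm hmn hpk' hkm' hmn'
    obtain ⟨e1, e2, e3⟩ := FF_inj hpk hkm (by omega) hpk' hkm' (by omega) heq
    simp [Prod.ext_iff, e1, e2, e3]
  rw [hset, Set.ncard_coe_finset, Finset.card_insert_of_notMem hnotmem,
    Finset.card_image_of_injOn hinj, card_Trip]
  have h3 : (n+1).choose 3 = n.choose 2 + n.choose 3 := Nat.choose_succ_succ n 2
  omega
end

section
/- For n ≥ 2, let π = (2,3,…,n,1) be the cyclic shift of the identity. Then |S_out(identity) ∩ S_out(π)| ≥ 2^{n−1}. -/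
-- helper: strip around a non-member
lemma strip_middle {x : ℕ} : ∀ (A A' B B' : List ℕ), x ∉ A → x ∉ A' →
    A ++ x :: B = A' ++ x :: B' → A = A' ∧ B = B' := by
  intro A
  induction A with
  | nil =>
    intro A' B B' hx hx' h
    cases A' with
    | nil => simpa using h
    | cons a t =>
      simp at h
      obtain ⟨rfl, -⟩ := h
      exact absurd (List.mem_cons_self : x ∈ x :: t) hx'
  | cons a tA ih =>
    intro A' B B' hx hx' h
    cases A' with
    | nil =>
      simp at h
      obtain ⟨rfl, -⟩ := h
      exact absurd (List.mem_cons_self : a ∈ a :: tA) hx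
    | cons a' t' =>
      simp at h
      obtain ⟨rfl, h2⟩ := h
      have := ih t' B B' (fun m => hx (List.mem_cons_of_mem _ m))
        (fun m => hx' (List.mem_cons_of_mem _ m)) h2
      exact ⟨by rw [this.1], this.2⟩

lemma key : ∀ (l : List ℕ), l.Nodup → ∀ (b b' : List Bool),
    b.length = l.length → b'.length = l.length →
    ((l.zip b).filter (fun p => p.2)).map Prod.fst
      = ((l.zip b').filter (fun p => p.2)).map Prod.fst → b = b' := by
  intro l
  induction l with
  | nil =>
    intro _ b b' hb hb' _
    simp at hb hb'
    rw [hb, hb']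
  | cons a t ih =>
    intro hnd b b' hb hb' h
    cases b with
    | nil => simp at hb
    | cons x bt =>
      cases b' with
      | nil => simp at hb'
      | cons x' bt' =>
        simp at hb hb'
        have ha : a ∉ t := (List.nodup_cons.mp hnd).1
        have hnd' : t.Nodup := (List.nodup_cons.mp hnd).2
        have hsub : ∀ (c : List Bool), a ∉ ((t.zip c).filter (fun p => p.2)).map Prod.fst := by
          intro c hm
          simp only [List.mem_map, List.mem_filter] at hm
          obtain ⟨⟨p1, p2⟩, ⟨hp, _⟩, hpa⟩ := hm
          exact ha (hpa ▸ (List.of_mem_zip hp).1)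
        cases x <;> cases x' <;> simp [List.zip_cons_cons] at h
        · rw [ih hnd' bt bt' hb hb' h]
        · exact absurd (h ▸ (List.mem_cons_self : a ∈ a :: _)) (hsub bt)
        · exact absurd (h.symm ▸ (List.mem_cons_self : a ∈ a :: _)) (hsub bt')
        · rw [ih hnd' bt bt' hb hb' h]

lemma swap_lemma (r : List ℕ) (c : List Bool) (h : c.length = r.length) (x : ℕ) :
    tdrl (false :: c) (x :: r) = tdrl (c ++ [true]) (r ++ [x]) := by
  unfold tdrl
  rw [List.zip_cons_cons, List.zip_append h.symm]
  simp [List.filter_append]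

lemma sout_finite (π : List ℕ) : (SOut π).Finite := by
  apply ((List.finite_length_eq Bool π.length).image (fun b => tdrl b π)).subset
  rintro ρ ⟨b, hb, rfl⟩
  exact ⟨b, hb, rfl⟩

theorem stmt_9 (n : ℕ) (hn : 2 ≤ n) :
    2 ^ (n - 1) ≤ (SOut (ident n) ∩ SOut (List.range' 2 (n - 1) ++ [1])).ncard := by
  set r := List.range' 2 (n - 1) with hr
  have hrlen : r.length = n - 1 := by rw [hr]; exact List.length_range'
  have hident : ident n = 1 :: r := by
    rw [ident, hr]
    have h1 : n = (n - 1) + 1 := by omega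
    rw [h1, List.range'_succ]
    norm_num
  set f : (Fin (n - 1) → Bool) → List ℕ :=
    fun c => tdrl (false :: List.ofFn c) (ident n) with hf
  have hnot1 : ∀ c : List Bool, (1 : ℕ) ∉
      ((r.zip c).filter (fun p => p.2)).map Prod.fst := by
    intro c hm
    simp only [List.mem_map, List.mem_filter] at hm
    obtain ⟨⟨p1, p2⟩, ⟨hp, _⟩, hpa⟩ := hm
    have hm1 := (List.of_mem_zip hp).1
    simp only at hpa
    rw [hpa, hr, List.mem_range'] at hm1
    omega
  have hnot1' : ∀ c : List Bool, (1 : ℕ) ∉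
      ((r.zip c).filter (fun p => !p.2)).map Prod.fst := by
    intro c hm
    simp only [List.mem_map, List.mem_filter] at hm
    obtain ⟨⟨p1, p2⟩, ⟨hp, _⟩, hpa⟩ := hm
    have hm1 := (List.of_mem_zip hp).1
    simp only at hpa
    rw [hpa, hr, List.mem_range'] at hm1
    omega
  have hfc : ∀ c : Fin (n - 1) → Bool,
      f c = ((r.zip (List.ofFn c)).filter (fun p => p.2)).map Prod.fst
        ++ 1 :: ((r.zip (List.ofFn c)).filter (fun p => !p.2)).map Prod.fst := by
    intro c
    rw [hf]; show tdrl _ _ = _; rw [hident, tdrl, List.zip_cons_cons]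
    simp
  have hinj : Function.Injective f := by
    intro c c' hcc
    rw [hfc, hfc] at hcc
    have h1 := strip_middle _ _ _ _ (hnot1 _) (hnot1 _) hcc
    have hlen : (List.ofFn c).length = r.length := by simp [hrlen]
    have hlen' : (List.ofFn c').length = r.length := by simp [hrlen]
    have := key r (by rw [hr]; exact List.nodup_range' _ Nat.one_pos) (List.ofFn c) (List.ofFn c') hlen hlen' h1.1
    exact List.ofFn_injective this
  have hsub : Set.range f ⊆ SOut (ident n) ∩ SOut (r ++ [1]) := by
    rintro ρ ⟨c, rfl⟩
    constructor
    · refine ⟨false :: List.ofFn c, ?_, rfl⟩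
      simp [hident, hrlen]
    · refine ⟨List.ofFn c ++ [true], ?_, ?_⟩
      · simp [hrlen]
      · rw [hf, hident]
        exact (swap_lemma r (List.ofFn c) (by simp [hrlen]) 1).symm
  have hfin : (SOut (ident n) ∩ SOut (r ++ [1])).Finite :=
    (sout_finite (ident n)).inter_of_left _
  have hcard : (Set.range f).ncard = 2 ^ (n - 1) := by
    rw [← Set.image_univ, Set.ncard_image_of_injective _ hinj, Set.ncard_univ]
    simp [Nat.card_eq_fintype_card]
  rw [← hcard]
  exact Set.ncard_le_ncard hsub hfin
end

section
/- For every n ≥ 3, any permutation π of {1,…,n} is uniquely determined by any 2^{n−1} + 1 distinct elements of S_out(π); that is, if π ≠ ρ are permutations of {1,…,n} with n ≥ 3, then |S_out(π) ∩ S_out(ρ)| ≤ 2^{n−1}. -/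
section Aux

/-- In a nodup list, `x` cannot be both before and after `y`. -/
lemma pair_sublist_asymm : ∀ {l : List ℕ}, l.Nodup → ∀ {x y : ℕ}, x ≠ y →
    List.Sublist [x, y] l → List.Sublist [y, x] l → False := by
  intro l
  induction l with
  | nil => intro _ x y _ h; cases h
  | cons a t ih =>
    intro hnd x y hxy h1 h2
    rw [List.nodup_cons] at hnd
    cases h1 with
    | cons _ h1' =>
      cases h2 with
      | cons _ h2' => exact ih hnd.2 hxy h1' h2'
      | cons_cons _ h2' =>
        have : a ∈ t := h1'.subset (by simp)
        exact hnd.1 this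
    | cons_cons _ h1' =>
      cases h2 with
      | cons _ h2' =>
        have : a ∈ t := h2'.subset (by simp)
        exact hnd.1 this
      | cons_cons _ h2' => exact hxy rfl

/-- Totality of relative order in a list. -/
lemma pair_sublist_total : ∀ {l : List ℕ} {x y : ℕ}, x ∈ l → y ∈ l → x ≠ y →
    List.Sublist [x, y] l ∨ List.Sublist [y, x] l := by
  intro l
  induction l with
  | nil => intro x y hx; cases hx
  | cons a t ih =>
    intro x y hx hy hxy
    by_cases hxa : x = a
    · subst hxa
      have hyt : y ∈ t := by
        rcases List.mem_cons.mp hy with h | h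
        · exact absurd h.symm hxy
        · exact h
      exact Or.inl (List.Sublist.cons₂ x (List.singleton_sublist.mpr hyt))
    · by_cases hya : y = a
      · subst hya
        have hxt : x ∈ t := by
          rcases List.mem_cons.mp hx with h | h
          · exact absurd h hxa
          · exact h
        exact Or.inr (List.Sublist.cons₂ y (List.singleton_sublist.mpr hxt))
      · have hxt : x ∈ t := by
          rcases List.mem_cons.mp hx with h | h
          · exact absurd h hxa
          · exact h
        have hyt : y ∈ t := by
          rcases List.mem_cons.mp hy with h | h
          · exact absurd h hya
          · exact h
        rcases ih hxt hyt hxy with h | h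
        · exact Or.inl (List.Sublist.cons a h)
        · exact Or.inr (List.Sublist.cons a h)

/-- Two nodup-perm lists agreeing on all relative orders are equal. -/
lemma eq_of_pair_orders : ∀ {l₁ l₂ : List ℕ}, l₁.Perm l₂ → l₂.Nodup →
    (∀ x y, List.Sublist [x, y] l₁ → List.Sublist [x, y] l₂) → l₁ = l₂ := by
  intro l₁
  induction l₁ with
  | nil => intro l₂ hp _ _; exact hp.nil_eq
  | cons a t ih =>
    intro l₂ hp hnd h
    cases l₂ with
    | nil => exact absurd hp.symm.nil_eq (by simp)
    | cons b t₂ =>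
      rw [List.nodup_cons] at hnd
      have hab : a = b := by
        by_contra hab
        have hbm : b ∈ a :: t := hp.mem_iff.mpr (by simp)
        have hbt : b ∈ t := by
          rcases List.mem_cons.mp hbm with h' | h'
          · exact absurd h'.symm hab
          · exact h'
        have h1 : (List.Sublist [a, b] (a :: t)) := List.Sublist.cons₂ a (List.singleton_sublist.mpr hbt)
        have h2 : (List.Sublist [a, b] (b :: t₂)) := h a b h1
        cases h2 with
        | cons _ h2' =>
          have : b ∈ t₂ := h2'.subset (by simp)
          exact hnd.1 this
        | cons_cons _ h2' => exact hab rfl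
      subst hab
      have hp' : t.Perm t₂ := hp.cons_inv
      have hat : a ∉ t := fun hat => hnd.1 (hp'.mem_iff.mp hat)
      refine congrArg (a :: ·) (ih hp' hnd.2 ?_)
      intro x y hxy
      have hx : x ∈ t := hxy.subset (by simp)
      have h2 : (List.Sublist [x, y] (a :: t₂)) := h x y (List.Sublist.cons a hxy)
      cases h2 with
      | cons _ h2' => exact h2'
      | cons_cons _ h2' => exact absurd hx (by intro hx'; exact hat hx')

/-- A sublist of a nodup list is recovered by filtering on membership. -/
lemma sublist_filter_mem_eq : ∀ {A l : List ℕ}, A.Sublist l → l.Nodup →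
    l.filter (fun z => decide (z ∈ A)) = A := by
  intro A l h
  induction h with
  | slnil => intro _; simp
  | @cons l₁ l₂ a h ih =>
    intro hnd
    rw [List.nodup_cons] at hnd
    have ha : a ∉ l₁ := fun ha => hnd.1 (h.subset ha)
    rw [List.filter_cons]
    simp only [ha, decide_false, Bool.false_eq_true, if_false]
    exact ih hnd.2
  | @cons_cons l₁ l₂ a h ih =>
    intro hnd
    rw [List.nodup_cons] at hnd
    rw [List.filter_cons]
    have hd : decide (a ∈ a :: l₁) = true := by simp
    rw [hd, if_pos rfl]
    have heq : l₂.filter (fun z => decide (z ∈ a :: l₁)) =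
        l₂.filter (fun z => decide (z ∈ l₁)) := by
      apply List.filter_congr
      intro z hz
      have hza : z ≠ a := fun h' => hnd.1 (h' ▸ hz)
      simp [hza]
    rw [heq, ih hnd.2]

/-- Recovering a two-sublist split of a nodup list from the prefix's element set. -/
lemma filter_split_eq {base A₀ B₀ : List ℕ} (hbnd : base.Nodup) (hA₀ : A₀.Sublist base)
    (hB₀ : B₀.Sublist base) (hp : (A₀ ++ B₀).Perm base) :
    base.filter (fun z => decide (z ∈ A₀.toFinset)) ++
      base.filter (fun z => !decide (z ∈ A₀.toFinset)) = A₀ ++ B₀ := by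
  have hdisj := (List.nodup_append'.mp (hp.nodup_iff.mpr hbnd)).2.2
  congr 1
  · have heq : base.filter (fun z => decide (z ∈ A₀.toFinset)) =
        base.filter (fun z => decide (z ∈ A₀)) := by
      apply List.filter_congr
      intro z _
      simp [List.mem_toFinset]
    rw [heq]
    exact sublist_filter_mem_eq hA₀ hbnd
  · have heq : base.filter (fun z => !decide (z ∈ A₀.toFinset)) =
        base.filter (fun z => decide (z ∈ B₀)) := by
      apply List.filter_congr
      intro z hz
      have hmem : z ∈ A₀ ∨ z ∈ B₀ := by
        have := hp.mem_iff.mpr hz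
        rwa [List.mem_append] at this
      rcases hmem with h | h
      · have hnb : z ∉ B₀ := fun h' => hdisj h h'
        simp [List.mem_toFinset, h, hnb]
      · have hna : z ∉ A₀ := fun h' => hdisj h' h
        simp [List.mem_toFinset, h, hna]
    rw [heq]
    exact sublist_filter_mem_eq hB₀ hbnd

/-- Structure of a TDRL product. -/
lemma sout_spec {l σ : List ℕ} (h : σ ∈ SOut l) :
    ∃ A B : List ℕ, σ = A ++ B ∧ A.Sublist l ∧ B.Sublist l ∧ (A ++ B).Perm l := by
  obtain ⟨b, hb, ht⟩ := h
  unfold tdrl at ht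
  have hlen : l.length ≤ b.length := le_of_eq hb.symm
  have hfst : (l.zip b).map Prod.fst = l := List.map_fst_zip hlen
  refine ⟨((l.zip b).filter (fun p => p.2)).map Prod.fst,
          ((l.zip b).filter (fun p => !p.2)).map Prod.fst, ht.symm, ?_, ?_, ?_⟩
  · conv_rhs => rw [← hfst]
    exact (List.filter_sublist (l := _)).map Prod.fst
  · conv_rhs => rw [← hfst]
    exact (List.filter_sublist (l := _)).map Prod.fst
  · rw [← List.map_append]
    conv_rhs => rw [← hfst]
    exact (List.filter_append_perm (fun p => p.2) (l.zip b)).map Prod.fst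

/-- If `y` precedes `x` in `l` and `x` precedes `y` in `σ = A ++ B` (a split of `l`
into two sublists), then `x ∈ A` and `y ∈ B`. -/
lemma split_mem {σ l A B : List ℕ} {x y : ℕ} (hσ : σ = A ++ B) (hA : A.Sublist l) (hB : B.Sublist l)
    (hperm : (A ++ B).Perm l) (hl : l.Nodup) (hyx : List.Sublist [y, x] l) (hxy : List.Sublist [x, y] σ) :
    x ∈ A ∧ y ∈ B := by
  have hσnd : σ.Nodup := hσ ▸ (hperm.nodup_iff.mpr hl)
  have hxy' : x ≠ y := by
    have := hxy.nodup hσnd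
    simp at this
    exact this
  have hxσ : x ∈ σ := hxy.subset (by simp)
  have hyσ : y ∈ σ := hxy.subset (by simp)
  rw [hσ, List.mem_append] at hxσ hyσ
  rw [hσ] at hσnd hxy
  rcases hxσ with hxA | hxB
  · rcases hyσ with hyA | hyB
    · exfalso
      rcases pair_sublist_total hxA hyA hxy' with h | h
      · exact pair_sublist_asymm hl hxy'.symm hyx (h.trans hA)
      · exact pair_sublist_asymm hσnd hxy' hxy (h.trans (List.sublist_append_left A B))
    · exact ⟨hxA, hyB⟩
  · exfalso
    rcases hyσ with hyA | hyB
    · have hs : (List.Sublist [y, x] (A ++ B)) :=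
        List.Sublist.append (List.singleton_sublist.mpr hyA) (List.singleton_sublist.mpr hxB)
      exact pair_sublist_asymm hσnd hxy' hxy hs
    · rcases pair_sublist_total hxB hyB hxy' with h | h
      · exact pair_sublist_asymm hl hxy'.symm hyx (h.trans hB)
      · exact pair_sublist_asymm hσnd hxy' hxy (h.trans (List.sublist_append_right A B))

/-- Counting subsets of `F` containing `x` but not `y`. -/
lemma count_half {F : Finset ℕ} {x y : ℕ} (hx : x ∈ F) (hy : y ∈ F) (hxy : x ≠ y) :
    (F.powerset.filter (fun T : Finset ℕ => x ∈ T ∧ y ∉ T)).card ≤ 2 ^ (F.card - 2) := by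
  have hmaps : ∀ T ∈ F.powerset.filter (fun T : Finset ℕ => x ∈ T ∧ y ∉ T),
      T.erase x ∈ ((F.erase x).erase y).powerset := by
    intro T hT
    rw [Finset.mem_filter, Finset.mem_powerset] at hT
    rw [Finset.mem_powerset]
    intro z hz
    rw [Finset.mem_erase] at hz
    rw [Finset.mem_erase, Finset.mem_erase]
    exact ⟨fun h' => hT.2.2 (h' ▸ hz.2), hz.1, hT.1 hz.2⟩
  have hinj : Set.InjOn (fun T => T.erase x)
      (↑(F.powerset.filter (fun T : Finset ℕ => x ∈ T ∧ y ∉ T)) : Set (Finset ℕ)) := by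
    intro T1 h1 T2 h2 h
    simp only [Finset.coe_filter, Set.mem_setOf_eq, Finset.mem_powerset] at h1 h2
    have e1 : insert x (T1.erase x) = T1 := Finset.insert_erase h1.2.1
    have e2 : insert x (T2.erase x) = T2 := Finset.insert_erase h2.2.1
    rw [← e1, ← e2]
    simp only at h
    rw [h]
  have hcard := Finset.card_le_card_of_injOn _ hmaps hinj
  rwa [Finset.card_powerset, Finset.card_erase_of_mem (Finset.mem_erase.mpr ⟨hxy.symm, hy⟩),
    Finset.card_erase_of_mem hx] at hcard

end Aux

theorem stmt_10 (n : ℕ) (hn : 3 ≤ n) (π ρ : List ℕ)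
    (hπ : IsPermOf n π) (hρ : IsPermOf n ρ) (hne : π ≠ ρ) :
    (SOut π ∩ SOut ρ).ncard ≤ 2 ^ (n - 1) := by
  have hident : (ident n).Nodup := by
    unfold ident
    exact List.nodup_range' 1
  have hnπ : π.Nodup := hπ.nodup_iff.mpr hident
  have hnρ : ρ.Nodup := hρ.nodup_iff.mpr hident
  have hπρ : π.Perm ρ := hπ.trans hρ.symm
  have hex : ∃ x y, List.Sublist [x, y] π ∧ ¬List.Sublist [x, y] ρ := by
    by_contra h
    push_neg at h
    exact hne (eq_of_pair_orders hπρ hnρ h)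
  obtain ⟨x, y, hxyπ, hxyρ⟩ := hex
  have hxy : x ≠ y := by
    have := hxyπ.nodup hnπ
    simp at this
    exact this
  have hxρ : x ∈ ρ := hπρ.mem_iff.mp (hxyπ.subset (by simp))
  have hyρ : y ∈ ρ := hπρ.mem_iff.mp (hxyπ.subset (by simp))
  have hyxρ : List.Sublist [y, x] ρ := (pair_sublist_total hxρ hyρ hxy).resolve_left hxyρ
  set F : Finset ℕ := ρ.toFinset with hF
  set Gf : Finset (Finset ℕ) :=
    F.powerset.filter (fun T : Finset ℕ => (x ∈ T ∧ y ∉ T) ∨ (y ∈ T ∧ x ∉ T)) with hGf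
  set g : Finset ℕ → List ℕ := fun T =>
    (if x ∈ T then ρ else π).filter (fun z => decide (z ∈ T)) ++
      (if x ∈ T then ρ else π).filter (fun z => !decide (z ∈ T)) with hg
  have cover : SOut π ∩ SOut ρ ⊆ g '' ↑Gf := by
    rintro σ ⟨hσπ, hσρ⟩
    obtain ⟨A, B, hsAB, hA, hB, hABp⟩ := sout_spec hσπ
    obtain ⟨A', B', hsAB', hA', hB', hABp'⟩ := sout_spec hσρ
    have hσperm : σ.Perm ρ := hsAB' ▸ hABp'
    have hσnd : σ.Nodup := hσperm.nodup_iff.mpr hnρ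
    have hxσ : x ∈ σ := hσperm.mem_iff.mpr hxρ
    have hyσ : y ∈ σ := hσperm.mem_iff.mpr hyρ
    rcases pair_sublist_total hxσ hyσ hxy with hord | hord
    · obtain ⟨hxA', hyB'⟩ := split_mem hsAB' hA' hB' hABp' hnρ hyxρ hord
      have hyA' : y ∉ A' := fun hyA' =>
        (List.nodup_append'.mp (hsAB' ▸ hσnd)).2.2 hyA' hyB'
      refine ⟨A'.toFinset, ?_, ?_⟩
      · simp only [hGf, Finset.coe_filter, Set.mem_setOf_eq, Finset.mem_powerset]
        refine ⟨?_, Or.inl ⟨List.mem_toFinset.mpr hxA', ?_⟩⟩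
        · intro z hz
          rw [List.mem_toFinset] at hz
          rw [hF, List.mem_toFinset]
          exact hA'.subset hz
        · rw [List.mem_toFinset]
          exact hyA'
      · have hxT : x ∈ A'.toFinset := List.mem_toFinset.mpr hxA'
        simp only [hg, if_pos hxT]
        rw [filter_split_eq hnρ hA' hB' hABp']
        exact hsAB'.symm
    · obtain ⟨hyA, hxB⟩ := split_mem hsAB hA hB hABp hnπ hxyπ hord
      have hxA : x ∉ A := fun hxA =>
        (List.nodup_append'.mp (hsAB ▸ hσnd)).2.2 hxA hxB
      refine ⟨A.toFinset, ?_, ?_⟩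
      · simp only [hGf, Finset.coe_filter, Set.mem_setOf_eq, Finset.mem_powerset]
        refine ⟨?_, Or.inr ⟨List.mem_toFinset.mpr hyA, ?_⟩⟩
        · intro z hz
          rw [List.mem_toFinset] at hz
          rw [hF, List.mem_toFinset]
          exact hπρ.mem_iff.mp (hA.subset hz)
        · rw [List.mem_toFinset]
          exact hxA
      · have hxT : x ∉ A.toFinset := by
          rw [List.mem_toFinset]
          exact hxA
        simp only [hg, if_neg hxT]
        rw [filter_split_eq hnπ hA hB hABp]
        exact hsAB.symm
  have hρlen : ρ.length = n := by
    have := hρ.length_eq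
    simpa [ident] using this
  have hFcard : F.card = n := by
    rw [hF, List.toFinset_card_of_nodup hnρ, hρlen]
  have hxF : x ∈ F := List.mem_toFinset.mpr hxρ
  have hyF : y ∈ F := List.mem_toFinset.mpr hyρ
  have hGsplit : Gf = F.powerset.filter (fun T : Finset ℕ => x ∈ T ∧ y ∉ T) ∪
      F.powerset.filter (fun T : Finset ℕ => y ∈ T ∧ x ∉ T) := by
    rw [hGf, Finset.filter_or]
  have hGcard : Gf.card ≤ 2 ^ (n - 1) := by
    calc Gf.card ≤ (F.powerset.filter (fun T : Finset ℕ => x ∈ T ∧ y ∉ T)).card +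
        (F.powerset.filter (fun T : Finset ℕ => y ∈ T ∧ x ∉ T)).card := by
          rw [hGsplit]
          exact Finset.card_union_le _ _
      _ ≤ 2 ^ (F.card - 2) + 2 ^ (F.card - 2) :=
          add_le_add (count_half hxF hyF hxy) (count_half hyF hxF hxy.symm)
      _ = 2 ^ (n - 1) := by
          rw [hFcard]
          have h2 : n - 1 = (n - 2) + 1 := by omega
          rw [h2, pow_succ]
          ring
  calc (SOut π ∩ SOut ρ).ncard ≤ (g '' ↑Gf).ncard :=
        Set.ncard_le_ncard cover (Gf.finite_toSet.image g)
    _ ≤ (↑Gf : Set (Finset ℕ)).ncard := Set.ncard_image_le Gf.finite_toSet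
    _ = Gf.card := Set.ncard_coe_finset Gf
    _ ≤ 2 ^ (n - 1) := hGcard
end

section
/- For all 2 ≤ k ≤ n, the number of distinct permutations ρ of {1,…,n} such that ρ is obtainable from the identity by a single width-k bounded TDRL operation and the identity is obtainable from ρ by a single width-k bounded TDRL operation equals (n−k+1)·C(k,2) + C(k,3) + 1. -/
namespace Stmt12
open List

def FT (b : List Bool) (l : List ℕ) : List ℕ := ((l.zip b).filter (fun p => p.2)).map Prod.fst
def GF (b : List Bool) (l : List ℕ) : List ℕ := ((l.zip b).filter (fun p => !p.2)).map Prod.fst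

lemma tdrl_eq (b : List Bool) (l : List ℕ) : tdrl b l = FT b l ++ GF b l := rfl

@[simp] lemma FT_nil (l : List ℕ) : FT [] l = [] := by simp [FT]
@[simp] lemma FT_nil' (b : List Bool) : FT b [] = [] := by simp [FT]
@[simp] lemma GF_nil (l : List ℕ) : GF [] l = [] := by simp [GF]
@[simp] lemma GF_nil' (b : List Bool) : GF b [] = [] := by simp [GF]

lemma FT_cons (t : Bool) (b : List Bool) (a : ℕ) (l : List ℕ) :
    FT (t::b) (a::l) = if t then a :: FT b l else FT b l := by
  cases t <;> simp [FT]

lemma GF_cons (t : Bool) (b : List Bool) (a : ℕ) (l : List ℕ) :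
    GF (t::b) (a::l) = if t then GF b l else a :: GF b l := by
  cases t <;> simp [GF]

lemma FT_sublist : ∀ (b : List Bool) (l : List ℕ), FT b l <+ l
  | [], l => by simp
  | _ :: _, [] => by simp
  | (t::b), (a::l) => by
      rw [FT_cons]
      cases t
      · exact (FT_sublist b l).cons a
      · exact (FT_sublist b l).cons₂ a

lemma GF_sublist : ∀ (b : List Bool) (l : List ℕ), GF b l <+ l
  | [], l => by simp
  | _ :: _, [] => by simp
  | (t::b), (a::l) => by
      rw [GF_cons]
      cases t
      · exact (GF_sublist b l).cons₂ a
      · exact (GF_sublist b l).cons a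

lemma tdrl_perm : ∀ (b : List Bool) (l : List ℕ), b.length = l.length → tdrl b l ~ l
  | [], [], _ => by simp [tdrl_eq]
  | (t::b), (a::l), h => by
      have ih := tdrl_perm b l (by simpa using h)
      rw [tdrl_eq, FT_cons, GF_cons]
      cases t
      · simpa [FT, GF] using (List.perm_middle.trans (ih.cons a)).symm.symm
      · simpa [tdrl_eq] using ih.cons a

lemma tdrl_length (b : List Bool) (l : List ℕ) (h : b.length = l.length) :
    (tdrl b l).length = l.length := (tdrl_perm b l h).length_eq

lemma FT_append {b₁ b₂ : List Bool} {l₁ l₂ : List ℕ} (h : b₁.length = l₁.length) :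
    FT (b₁ ++ b₂) (l₁ ++ l₂) = FT b₁ l₁ ++ FT b₂ l₂ := by
  simp [FT, List.zip_append h.symm]

lemma GF_append {b₁ b₂ : List Bool} {l₁ l₂ : List ℕ} (h : b₁.length = l₁.length) :
    GF (b₁ ++ b₂) (l₁ ++ l₂) = GF b₁ l₁ ++ GF b₂ l₂ := by
  simp [GF, List.zip_append h.symm]

lemma FT_replicate_true : ∀ l : List ℕ, FT (List.replicate l.length true) l = l
  | [] => by simp
  | (a::l) => by
      rw [List.length_cons, List.replicate_succ, FT_cons, if_pos rfl, FT_replicate_true l]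

lemma GF_replicate_true : ∀ l : List ℕ, GF (List.replicate l.length true) l = []
  | [] => by simp
  | (a::l) => by
      rw [List.length_cons, List.replicate_succ, GF_cons, if_pos rfl, GF_replicate_true l]

lemma FT_replicate_false : ∀ l : List ℕ, FT (List.replicate l.length false) l = []
  | [] => by simp
  | (a::l) => by
      rw [List.length_cons, List.replicate_succ, FT_cons, if_neg (by simp), FT_replicate_false l]

lemma GF_replicate_false : ∀ l : List ℕ, GF (List.replicate l.length false) l = l
  | [] => by simp
  | (a::l) => by
      rw [List.length_cons, List.replicate_succ, GF_cons, if_neg (by simp), GF_replicate_false l]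

/-- the 4-block computation -/
lemma tdrl_four (l₁ l₂ l₃ l₄ : List ℕ) :
    tdrl (List.replicate l₁.length true ++ (List.replicate l₂.length false ++
      (List.replicate l₃.length true ++ List.replicate l₄.length false)))
      (l₁ ++ (l₂ ++ (l₃ ++ l₄))) = (l₁ ++ l₃) ++ (l₂ ++ l₄) := by
  rw [tdrl_eq]
  rw [FT_append (by simp), FT_append (by simp), FT_append (by simp),
      GF_append (by simp), GF_append (by simp), GF_append (by simp)]
  rw [FT_replicate_true, FT_replicate_false, FT_replicate_true, FT_replicate_false,
      GF_replicate_true, GF_replicate_false, GF_replicate_true, GF_replicate_false]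
  simp


lemma rap (a m n : ℕ) : List.range' a m ++ List.range' (a+m) n = List.range' a (m+n) := by
  have := List.range'_append (s := a) (m := m) (n := n) (step := 1)
  simpa [Nat.add_comm] using this

lemma take_range' {m n : ℕ} (a : ℕ) (h : m ≤ n) : (List.range' a n).take m = List.range' a m := by
  rw [show n = m + (n - m) by omega, ← rap]
  have := List.take_left (l₁ := List.range' a m) (l₂ := List.range' (a+m) (n-m))
  simpa using this

lemma drop_range' {m n : ℕ} (a : ℕ) (h : m ≤ n) :
    (List.range' a n).drop m = List.range' (a+m) (n-m) := by
  rw [show n = m + (n - m) by omega, ← rap]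
  have := List.drop_left (l₁ := List.range' a m) (l₂ := List.range' (a+m) (n-m))
  simpa using this

lemma two_ranges_le_length {L : List ℕ} {a t c s : ℕ} (hnd : L.Nodup)
    (h1 : List.range' a t <+ L) (h2 : List.range' c s <+ L) (hd : a + t ≤ c) :
    t + s ≤ L.length := by
  classical
  have hsub : (List.range' a t).toFinset ∪ (List.range' c s).toFinset ⊆ L.toFinset := by
    intro x hx
    rw [Finset.mem_union] at hx
    rcases hx with hx | hx <;> rw [List.mem_toFinset] at hx <;>
      exact List.mem_toFinset.2 (List.Sublist.subset (by assumption) hx)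
  have hdisj : Disjoint (List.range' a t).toFinset (List.range' c s).toFinset := by
    rw [Finset.disjoint_left]
    intro x hx hx'
    rw [List.mem_toFinset, List.mem_range'_1] at hx hx'
    omega
  have hcard : ((List.range' a t).toFinset ∪ (List.range' c s).toFinset).card = t + s := by
    rw [Finset.card_union_of_disjoint hdisj,
      List.toFinset_card_of_nodup (List.nodup_range'),
      List.toFinset_card_of_nodup (List.nodup_range'), List.length_range', List.length_range']
  calc t + s = _ := hcard.symm
    _ ≤ L.toFinset.card := Finset.card_le_card hsub
    _ = L.length := List.toFinset_card_of_nodup hnd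

lemma sorted_two_ranges {L : List ℕ} {a t c s : ℕ} (hnd : L.Nodup)
    (hst : L.Pairwise (· < ·))
    (h1 : List.range' a t <+ L) (h2 : List.range' c s <+ L) (hd : a + t ≤ c)
    (hlen : L.length ≤ t + s) : L = List.range' a t ++ List.range' c s := by
  classical
  haveI : IsAntisymm ℕ (· < ·) := ⟨fun a b h h' => absurd (h.trans h') (lt_irrefl _)⟩
  have hsub : (List.range' a t).toFinset ∪ (List.range' c s).toFinset ⊆ L.toFinset := by
    intro x hx
    rw [Finset.mem_union] at hx
    rcases hx with hx | hx <;> rw [List.mem_toFinset] at hx <;>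
      exact List.mem_toFinset.2 (List.Sublist.subset (by assumption) hx)
  have hdisj : Disjoint (List.range' a t).toFinset (List.range' c s).toFinset := by
    rw [Finset.disjoint_left]
    intro x hx hx'
    rw [List.mem_toFinset, List.mem_range'_1] at hx hx'
    omega
  have hcard : ((List.range' a t).toFinset ∪ (List.range' c s).toFinset).card = t + s := by
    rw [Finset.card_union_of_disjoint hdisj,
      List.toFinset_card_of_nodup (List.nodup_range'),
      List.toFinset_card_of_nodup (List.nodup_range'), List.length_range', List.length_range']
  have heq : (List.range' a t).toFinset ∪ (List.range' c s).toFinset = L.toFinset := by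
    apply Finset.eq_of_subset_of_card_le hsub
    rw [hcard, List.toFinset_card_of_nodup hnd]
    exact hlen
  have hRnd : (List.range' a t ++ List.range' c s).Nodup := by
    rw [List.nodup_append]
    refine ⟨List.nodup_range', List.nodup_range', ?_⟩
    intro x hx y hy
    rw [List.mem_range'_1] at hx hy
    omega
  have hperm : L ~ List.range' a t ++ List.range' c s := by
    rw [List.perm_ext_iff_of_nodup hnd hRnd]
    intro x
    have : x ∈ L.toFinset ↔ x ∈ (List.range' a t).toFinset ∪ (List.range' c s).toFinset := by
      rw [heq]
    simpa [List.mem_toFinset] using this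
  refine List.Perm.eq_of_pairwise' hst ?_ hperm
  rw [List.pairwise_append]
  refine ⟨List.pairwise_lt_range', List.pairwise_lt_range', ?_⟩
  intro x hx y hy
  rw [List.mem_range'_1] at hx hy
  omega


/-- block swap permutation -/
def bs (n x y z : ℕ) : List ℕ :=
  List.range' 1 x ++ List.range' (y+1) (z-y) ++ List.range' (x+1) (y-x) ++ List.range' (z+1) (n-z)

lemma range'_glue {a m c s : ℕ} (h : c = a + m) :
    List.range' a m ++ List.range' c s = List.range' a (m+s) := by subst h; exact rap a m s

@[simp] lemma ident_length (n : ℕ) : (ident n).length = n := by simp [ident]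

lemma ident_nodup (n : ℕ) : (ident n).Nodup := List.nodup_range'

lemma out_struct {n k : ℕ} {ρ : List ℕ} (hkn : k ≤ n) (h : ρ ∈ SOutK k (ident n)) :
    ∃ i A B, i + k ≤ n ∧
      (∀ x ∈ A, i+1 ≤ x ∧ x < i+1+k) ∧ (∀ x ∈ B, i+1 ≤ x ∧ x < i+1+k) ∧
      A.Pairwise (· < ·) ∧ B.Pairwise (· < ·) ∧
      ρ = (List.range' 1 i ++ A) ++ (B ++ List.range' (i+k+1) (n-(i+k))) := by
  obtain ⟨i, b, hik, hb, hρ⟩ := h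
  rw [ident_length] at hik
  have hdrop : (ident n).drop i = List.range' (1+i) (n-i) := drop_range' 1 (by omega)
  have htake : ((ident n).drop i).take k = List.range' (1+i) k := by
    rw [hdrop]; exact take_range' _ (by omega)
  have htk : (ident n).take i = List.range' 1 i := take_range' 1 (by omega)
  have hdk : (ident n).drop (i+k) = List.range' (1+(i+k)) (n-(i+k)) := drop_range' 1 (by omega)
  set s : List ℕ := List.range' (1+i) k with hs
  refine ⟨i, FT b s, GF b s, hik, ?_, ?_, ?_, ?_, ?_⟩
  · intro x hx
    have := (FT_sublist b s).subset hx
    rw [hs, List.mem_range'_1] at this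
    omega
  · intro x hx
    have := (GF_sublist b s).subset hx
    rw [hs, List.mem_range'_1] at this
    omega
  · exact List.Pairwise.sublist (FT_sublist b s) (by rw [hs]; exact List.pairwise_lt_range')
  · exact List.Pairwise.sublist (GF_sublist b s) (by rw [hs]; exact List.pairwise_lt_range')
  · rw [hρ, htake, htk, hdk, tdrl_eq]
    have : 1+(i+k) = i+k+1 := by omega
    rw [this]
    simp [List.append_assoc]

lemma in_necess {n k : ℕ} {ρ : List ℕ} (hkn : k ≤ n) (h : ρ ∈ SInK k (ident n)) :
    ρ.Perm (ident n) ∧ ∃ M, M ≤ n ∧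
      List.range' 1 M <+ ρ ∧ List.range' (M+1) (n-M) <+ ρ := by
  obtain ⟨hperm, j, c, hjk, hc, hid⟩ := h
  have hρlen : ρ.length = n := by rw [hperm.length_eq, ident_length]
  rw [hρlen] at hjk
  set v : List ℕ := (ρ.drop j).take k with hv
  have hvlen : v.length = k := by
    rw [hv, List.length_take, List.length_drop, hρlen]; omega
  have htlen : (tdrl c v).length = k := by
    rw [tdrl_length c v (by rw [hc, hvlen])]; exact hvlen
  -- decompose the identity
  have e1 : ident n = (List.range' 1 j ++ List.range' (1+j) k) ++
      List.range' (1+j+k) (n-(j+k)) := by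
    rw [rap, range'_glue (by omega)]
    unfold ident; congr 1; omega
  rw [e1] at hid
  have hinj := List.append_inj hid.symm
    (by simp [List.length_take, hρlen, htlen]; omega)
  obtain ⟨hinj1, hDrop⟩ := hinj
  have hinj2 := List.append_inj hinj1 (by simp [List.length_take, hρlen]; omega)
  obtain ⟨hTake, hMid⟩ := hinj2
  set m : ℕ := (FT c v).length with hm
  have hmk : m ≤ k := by rw [hm, ← hvlen]; exact (FT_sublist c v).length_le
  have hMid2 : FT c v ++ GF c v = List.range' (1+j) m ++ List.range' (1+j+m) (k-m) := by
    rw [← tdrl_eq, hMid, range'_glue (by omega)]; congr 1; omega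
  have hinj3 := List.append_inj hMid2 (by simp [hm])
  obtain ⟨hF, hG⟩ := hinj3
  refine ⟨hperm, j + m, by omega, ?_, ?_⟩
  · -- range' 1 (j+m) <+ ρ
    have : List.range' 1 (j+m) = ρ.take j ++ FT c v := by
      rw [hTake, hF, range'_glue (by omega)]
    rw [this]
    calc ρ.take j ++ FT c v <+ ρ.take j ++ ρ.drop j :=
          List.Sublist.append (List.Sublist.refl _)
            ((FT_sublist c v).trans (by rw [hv]; exact List.take_sublist _ _))
      _ = ρ := List.take_append_drop j ρ
  · -- range' (j+m+1) (n-(j+m)) <+ ρ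
    have e2 : List.range' (j+m+1) (n-(j+m)) = GF c v ++ ρ.drop (j+k) := by
      rw [hG, hDrop, range'_glue (by omega)]
      congr 1 <;> omega
    rw [e2]
    have hd2 : ρ.drop (j+k) = (ρ.drop j).drop k := by rw [List.drop_drop]
    calc GF c v ++ ρ.drop (j+k) <+ (ρ.drop j).take k ++ (ρ.drop j).drop k := by
          rw [← hd2, hv] at *
          exact List.Sublist.append ((GF_sublist c v).trans (by rw [hv])) (by rw [hd2])
      _ = ρ.drop j := List.take_append_drop k _
      _ <+ ρ := List.drop_sublist j ρ

lemma forward {n k : ℕ} {ρ : List ℕ} (h2 : 2 ≤ k) (hkn : k ≤ n)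
    (hmem : ρ ∈ SOutK k (ident n) ∩ SInK k (ident n)) :
    ρ = ident n ∨ ∃ x y z, x < y ∧ y < z ∧ z ≤ n ∧ z - x ≤ k ∧ ρ = bs n x y z := by
  obtain ⟨hout, hin⟩ := hmem
  obtain ⟨i, A, B, hik, hA, hB, hAs, hBs, hρPQ⟩ := out_struct hkn hout
  obtain ⟨hperm, M, hM, hs1, hs2⟩ := in_necess hkn hin
  have hρnd : ρ.Nodup := (hperm.nodup_iff).2 (ident_nodup n)
  have hρlen : ρ.length = n := by rw [hperm.length_eq, ident_length]
  set P : List ℕ := List.range' 1 i ++ A with hP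
  set Q : List ℕ := B ++ List.range' (i+k+1) (n-(i+k)) with hQ
  have hPnd : P.Nodup := by
    rw [hρPQ, List.nodup_append] at hρnd; exact hρnd.1
  have hQnd : Q.Nodup := by
    rw [hρPQ, List.nodup_append] at hρnd; exact hρnd.2.1
  have hPsorted : P.Pairwise (· < ·) := by
    rw [hP, List.pairwise_append]
    refine ⟨List.pairwise_lt_range', hAs, ?_⟩
    intro x hx y hy
    rw [List.mem_range'_1] at hx
    have := hA y hy; omega
  have hQsorted : Q.Pairwise (· < ·) := by
    rw [hQ, List.pairwise_append]
    refine ⟨hBs, List.pairwise_lt_range', ?_⟩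
    intro x hx y hy
    rw [List.mem_range'_1] at hy
    have := hB x hx; omega
  rw [hρPQ] at hs1 hs2
  rw [List.sublist_append_iff] at hs1 hs2
  obtain ⟨u, w, huw, hu, hw⟩ := hs1
  obtain ⟨u', w', huw', hu', hw'⟩ := hs2
  set t : ℕ := u.length with ht
  set s : ℕ := u'.length with hsdef
  have htM : t ≤ M := by
    have := congrArg List.length huw
    simp [List.length_range'] at this; omega
  have hsnM : s ≤ n - M := by
    have := congrArg List.length huw'
    simp [List.length_range'] at this; omega
  have hu_eq : u = List.range' 1 t := by
    have : u = (List.range' 1 M).take t := by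
      rw [huw, ht, List.take_left]
    rw [this, take_range' _ htM]
  have hw_eq : w = List.range' (1+t) (M-t) := by
    have : w = (List.range' 1 M).drop t := by
      rw [huw, ht, List.drop_left]
    rw [this, drop_range' _ htM]
  have hu'_eq : u' = List.range' (M+1) s := by
    have : u' = (List.range' (M+1) (n-M)).take s := by
      rw [huw', hsdef, List.take_left]
    rw [this, take_range' _ hsnM]
  have hw'_eq : w' = List.range' (M+1+s) (n-M-s) := by
    have : w' = (List.range' (M+1) (n-M)).drop s := by
      rw [huw', hsdef, List.drop_left]
    rw [this, drop_range' _ hsnM]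
  rw [hu_eq] at hu; rw [hw_eq] at hw; rw [hu'_eq] at hu'; rw [hw'_eq] at hw'
  -- length accounting
  have hlenP : t + s ≤ P.length := two_ranges_le_length hPnd hu hu' (by omega)
  have hlenQ : (M-t) + (n-M-s) ≤ Q.length := two_ranges_le_length hQnd hw hw' (by omega)
  have hPQlen : P.length + Q.length = n := by
    rw [← List.length_append, ← hρPQ, hρlen]
  have hPlen : P.length ≤ t + s := by omega
  have hQlen : Q.length ≤ (M-t) + (n-M-s) := by omega
  have hPeq : P = List.range' 1 t ++ List.range' (M+1) s :=
    sorted_two_ranges hPnd hPsorted hu hu' (by omega) hPlen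
  have hQeq : Q = List.range' (1+t) (M-t) ++ List.range' (M+1+s) (n-M-s) :=
    sorted_two_ranges hQnd hQsorted hw hw' (by omega) hQlen
  by_cases hid1 : M = t
  · left
    rw [hρPQ, hPeq, hQeq, hid1]
    simp only [Nat.sub_self, List.range'_zero, List.nil_append, List.append_nil,
      List.append_assoc]
    rw [range'_glue (show t+1+s = (t+1)+s by omega), range'_glue (show t+1 = 1+t by omega)]
    unfold ident; congr 1; omega
  by_cases hid2 : s = 0
  · left
    rw [hρPQ, hPeq, hQeq, hid2]
    simp only [List.range'_zero, List.append_nil, Nat.add_zero, Nat.sub_zero,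
      List.append_assoc]
    rw [range'_glue (show M+1 = (1+t)+(M-t) by omega), range'_glue (show 1+t = 1+t from rfl)]
    unfold ident; congr 1; omega
  · right
    refine ⟨t, M, M+s, by omega, by omega, by omega, ?_, ?_⟩
    · -- width constraint
      have hMsP : M+s ∈ P := by
        rw [hPeq]
        refine List.mem_append_right _ ?_
        rw [List.mem_range'_1]; omega
      have ht1Q : t+1 ∈ Q := by
        rw [hQeq]
        refine List.mem_append_left _ ?_
        rw [List.mem_range'_1]; omega
      rw [hP, List.mem_append] at hMsP
      rw [hQ, List.mem_append] at ht1Q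
      have c1 : M+s < 1+i ∨ (i+1 ≤ M+s ∧ M+s < i+1+k) := by
        rcases hMsP with h | h
        · left; rw [List.mem_range'_1] at h; omega
        · right; exact hA _ h
      have c2 : (i+1 ≤ t+1 ∧ t+1 < i+1+k) ∨ i+k+1 ≤ t+1 := by
        rcases ht1Q with h | h
        · left; exact hB _ h
        · right; rw [List.mem_range'_1] at h; omega
      omega
    · rw [hρPQ, hPeq, hQeq]
      unfold bs
      rw [show M+s-M = s by omega, show M+s+1 = M+1+s by omega,
        show n-(M+s) = n-M-s by omega, show M-t = M-t from rfl,
        show (1:ℕ)+t = t+1 by omega]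
      simp [List.append_assoc]

lemma tdrl_replicate_true (l : List ℕ) : tdrl (List.replicate l.length true) l = l := by
  rw [tdrl_eq, FT_replicate_true, GF_replicate_true, List.append_nil]

lemma ident_four {n x y z : ℕ} (hxy : x ≤ y) (hyz : y ≤ z) (hzn : z ≤ n) :
    ident n = List.range' 1 x ++ (List.range' (x+1) (y-x) ++
      (List.range' (y+1) (z-y) ++ List.range' (z+1) (n-z))) := by
  rw [range'_glue (show z+1 = (y+1)+(z-y) by omega),
      range'_glue (show y+1 = (x+1)+(y-x) by omega),
      range'_glue (show x+1 = 1+x by omega)]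
  unfold ident; congr 1; omega

lemma ident_mem {n k : ℕ} (hk : 1 ≤ k) (hkn : k ≤ n) :
    ident n ∈ SOutK k (ident n) ∩ SInK k (ident n) := by
  have hlen : ((ident n).drop 0).take k = List.range' 1 k := by
    rw [List.drop_zero]
    exact take_range' 1 hkn
  have hb : (List.replicate k true).length = k := List.length_replicate
  have key : ident n = (ident n).take 0 ++ tdrl (List.replicate k true)
      (((ident n).drop 0).take k) ++ (ident n).drop (0+k) := by
    rw [List.take_zero, hlen, List.nil_append]
    rw [show List.replicate k true = List.replicate (List.range' 1 k).length true by
      rw [List.length_range']]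
    rw [tdrl_replicate_true]
    rw [show (0+k) = k by omega, show (ident n).drop k = List.range' (1+k) (n-k) from
      drop_range' 1 hkn]
    rw [range'_glue rfl]
    unfold ident; congr 1; omega
  exact ⟨⟨0, List.replicate k true, by rw [ident_length]; omega, hb, key⟩,
    List.Perm.refl _, 0, List.replicate k true, by rw [ident_length]; omega, hb, key⟩

lemma bs_mem {n k x y z : ℕ} (h2 : 2 ≤ k) (hkn : k ≤ n)
    (hx : x < y) (hy : y < z) (hz : z ≤ n) (hzx : z - x ≤ k) :
    bs n x y z ∈ SOutK k (ident n) ∩ SInK k (ident n) := by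
  set i : ℕ := min x (n - k) with hi
  have hik : i + k ≤ n := by omega
  have hix : i ≤ x := by omega
  have hzik : z ≤ i + k := by omega
  set l₁ : List ℕ := List.range' (1+i) (x-i) with hl₁
  set l₂ : List ℕ := List.range' (x+1) (y-x) with hl₂
  set l₃ : List ℕ := List.range' (y+1) (z-y) with hl₃
  set l₄ : List ℕ := List.range' (z+1) (i+k-z) with hl₄
  have hs : List.range' (1+i) k = l₁ ++ (l₂ ++ (l₃ ++ l₄)) := by
    rw [hl₁, hl₂, hl₃, hl₄,
      range'_glue (show z+1 = (y+1)+(z-y) by omega),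
      range'_glue (show y+1 = (x+1)+(y-x) by omega),
      range'_glue (show x+1 = (1+i)+(x-i) by omega)]
    congr 1; omega
  -- take/drop of ident
  have h1 : (ident n).take i = List.range' 1 i := take_range' 1 (by omega)
  have h2' : ((ident n).drop i).take k = List.range' (1+i) k := by
    rw [show (ident n).drop i = List.range' (1+i) (n-i) from drop_range' 1 (by omega)]
    exact take_range' _ (by omega)
  have h3 : (ident n).drop (i+k) = List.range' (1+(i+k)) (n-(i+k)) := drop_range' 1 (by omega)
  -- the pattern for the out direction
  set b : List Bool := List.replicate l₁.length true ++ (List.replicate l₂.length false ++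
    (List.replicate l₃.length true ++ List.replicate l₄.length false)) with hbdef
  have hblen : b.length = k := by
    rw [hbdef]
    simp only [List.length_append, List.length_replicate, hl₁, hl₂, hl₃, hl₄,
      List.length_range']
    omega
  have key : tdrl b (List.range' (1+i) k) = (l₁ ++ l₃) ++ (l₂ ++ l₄) := by
    rw [hs, hbdef]; exact tdrl_four l₁ l₂ l₃ l₄
  -- bs as the out-result
  have hbs : bs n x y z = (ident n).take i ++ tdrl b (((ident n).drop i).take k) ++
      (ident n).drop (i+k) := by
    rw [h1, h2', h3, key, bs]
    rw [show List.range' 1 x = List.range' 1 i ++ List.range' (1+i) (x-i) by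
      rw [range'_glue rfl]; congr 1; omega]
    rw [show List.range' (z+1) (n-z) =
        List.range' (z+1) (i+k-z) ++ List.range' (1+(i+k)) (n-(i+k)) by
      rw [show (1+(i+k)) = (z+1)+(i+k-z) by omega, range'_glue rfl]; congr 1; omega]
    simp only [hl₁, hl₂, hl₃, hl₄, List.append_assoc]
  -- permutation
  have hperm : (bs n x y z).Perm (ident n) := by
    rw [bs, ident_four (n:=n) (x:=x) (y:=y) (z:=z) (by omega) (by omega) hz]
    simp only [List.append_assoc]
    refine List.Perm.append_left _ ?_
    calc List.range' (y+1) (z-y) ++ (List.range' (x+1) (y-x) ++ List.range' (z+1) (n-z))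
        = (List.range' (y+1) (z-y) ++ List.range' (x+1) (y-x)) ++ List.range' (z+1) (n-z) := by
          rw [List.append_assoc]
      _ ~ (List.range' (x+1) (y-x) ++ List.range' (y+1) (z-y)) ++ List.range' (z+1) (n-z) :=
          List.Perm.append_right _ List.perm_append_comm
      _ = List.range' (x+1) (y-x) ++ (List.range' (y+1) (z-y) ++ List.range' (z+1) (n-z)) := by
          rw [List.append_assoc]
  refine ⟨⟨i, b, by rw [ident_length]; omega, hblen, hbs⟩, hperm, i, ?_⟩
  -- the In direction
  have hρlen : (bs n x y z).length = n := by rw [hperm.length_eq, ident_length]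
  set W : List ℕ := (l₁ ++ l₃) ++ (l₂ ++ l₄) with hW
  have hWlen : W.length = k := by
    rw [hW]
    simp only [List.length_append, hl₁, hl₂, hl₃, hl₄, List.length_range']
    omega
  have hρstruct : bs n x y z = List.range' 1 i ++ (W ++ List.range' (1+(i+k)) (n-(i+k))) := by
    rw [hbs, h1, h2', h3, key]
    simp only [List.append_assoc]
  have htake : (bs n x y z).take i = List.range' 1 i := by
    rw [hρstruct]
    exact List.take_left' (by rw [List.length_range'])
  have hdropik : (bs n x y z).drop (i+k) = List.range' (1+(i+k)) (n-(i+k)) := by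
    rw [hρstruct, ← List.append_assoc]
    exact List.drop_left' (by rw [List.length_append, List.length_range', hWlen])
  have hdropi : (bs n x y z).drop i = W ++ List.range' (1+(i+k)) (n-(i+k)) := by
    rw [hρstruct]
    exact List.drop_left' (by rw [List.length_range'])
  have hv : ((bs n x y z).drop i).take k = W := by
    rw [hdropi]
    exact List.take_left' hWlen
  set c : List Bool := List.replicate l₁.length true ++ (List.replicate l₃.length false ++
    (List.replicate l₂.length true ++ List.replicate l₄.length false)) with hcdef
  have hclen : c.length = k := by
    rw [hcdef]
    simp only [List.length_append, List.length_replicate, hl₁, hl₂, hl₃, hl₄,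
      List.length_range']
    omega
  refine ⟨c, by rw [hρlen]; omega, hclen, ?_⟩
  rw [htake, hdropik, hv]
  have hWassoc : W = l₁ ++ (l₃ ++ (l₂ ++ l₄)) := by rw [hW, List.append_assoc]
  have key2 : tdrl c W = List.range' (1+i) k := by
    rw [hWassoc, hcdef, tdrl_four l₁ l₃ l₂ l₄]
    rw [hl₁, hl₂, hl₃, hl₄]
    rw [range'_glue (show x+1 = (1+i)+(x-i) by omega),
        range'_glue (show z+1 = (y+1)+(z-y) by omega),
        range'_glue (show y+1 = (1+i)+((x-i)+(y-x)) by omega)]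
    congr 1; omega
  rw [key2, range'_glue rfl, range'_glue rfl]
  unfold ident; congr 1; omega

/-- parameter triples -/
def Tri (n k : ℕ) : Finset (ℕ × ℕ × ℕ) :=
  ((Finset.range (n+1)) ×ˢ (Finset.range (n+1)) ×ˢ (Finset.range (n+1))).filter
    (fun t => t.1 < t.2.1 ∧ t.2.1 < t.2.2 ∧ t.2.2 ≤ n ∧ t.2.2 - t.1 ≤ k)

lemma mem_Tri {n k x y z : ℕ} :
    (x, y, z) ∈ Tri n k ↔ x < y ∧ y < z ∧ z ≤ n ∧ z - x ≤ k := by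
  simp only [Tri, Finset.mem_filter, Finset.mem_product, Finset.mem_range]
  constructor
  · rintro ⟨-, h⟩; exact h
  · rintro ⟨h1, h2, h3, h4⟩; exact ⟨⟨by omega, by omega, by omega⟩, h1, h2, h3, h4⟩

lemma card_Tri (n : ℕ) : ∀ k, 2 ≤ k → k ≤ n → (Tri n k).card =
    (n - k + 1) * k.choose 2 + k.choose 3 := by
  intro k hk
  induction k, hk using Nat.le_induction with
  | base =>
    intro hn
    have : Tri n 2 = (Finset.range (n-1)).image (fun x => (x, x+1, x+2)) := by
      ext ⟨x, y, z⟩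
      rw [mem_Tri]
      simp only [Finset.mem_image, Finset.mem_range, Prod.mk.injEq]
      constructor
      · rintro ⟨h1, h2, h3, h4⟩
        exact ⟨x, by omega, rfl, by omega, by omega⟩
      · rintro ⟨a, ha, rfl, rfl, rfl⟩
        omega
    rw [this, Finset.card_image_of_injective _ (fun a b h => by
      simpa using congrArg (fun t => t.1) h), Finset.card_range]
    norm_num [Nat.choose]
    omega
  | succ k hk ih =>
    intro hn
    set Slice : Finset (ℕ × ℕ × ℕ) :=
      ((Finset.range (n-k)) ×ˢ (Finset.range k)).image
        (fun p => (p.1, p.1 + p.2 + 1, p.1 + k + 1)) with hSlice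
    have hunion : Tri n (k+1) = Tri n k ∪ Slice := by
      ext ⟨x, y, z⟩
      rw [Finset.mem_union, mem_Tri, mem_Tri, hSlice]
      simp only [Finset.mem_image, Finset.mem_product, Finset.mem_range, Prod.mk.injEq,
        Prod.exists]
      constructor
      · rintro ⟨h1, h2, h3, h4⟩
        by_cases hzk : z - x ≤ k
        · exact Or.inl ⟨h1, h2, h3, hzk⟩
        · exact Or.inr ⟨x, y - x - 1, ⟨by omega, by omega⟩, rfl, by omega, by omega⟩
      · rintro (⟨h1, h2, h3, h4⟩ | ⟨a, b, ⟨ha, hb⟩, rfl, rfl, rfl⟩)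
        · exact ⟨h1, h2, h3, by omega⟩
        · refine ⟨by omega, by omega, by omega, by omega⟩
    have hdisj : Disjoint (Tri n k) Slice := by
      rw [Finset.disjoint_left]
      rintro ⟨x, y, z⟩ hmem hmem'
      rw [mem_Tri] at hmem
      rw [hSlice] at hmem'
      simp only [Finset.mem_image, Finset.mem_product, Finset.mem_range, Prod.mk.injEq,
        Prod.exists] at hmem'
      obtain ⟨a, b, ⟨ha, hb⟩, rfl, rfl, rfl⟩ := hmem'
      omega
    have hSliceCard : Slice.card = (n - k) * k := by
      rw [hSlice, Finset.card_image_of_injective, Finset.card_product, Finset.card_range,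
        Finset.card_range]
      rintro ⟨a, b⟩ ⟨a', b'⟩ h
      simp only [Prod.mk.injEq] at h ⊢
      omega
    rw [hunion, Finset.card_union_of_disjoint hdisj, hSliceCard, ih (by omega)]
    obtain ⟨a, rfl⟩ := Nat.exists_eq_add_of_le hn
    rw [show k + 1 + a - k + 1 = a + 2 by omega, show k + 1 + a - (k+1) + 1 = a + 1 by omega,
      show k + 1 + a - k = a + 1 by omega]
    rw [show k + 1 = k + 1 from rfl]
    rw [Nat.choose_succ_succ k 1, Nat.choose_succ_succ k 2, Nat.choose_one_right]
    ring

lemma bs_length {n x y z : ℕ} (hx : x < y) (hy : y < z) (hz : z ≤ n) :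
    (bs n x y z).length = n := by
  simp only [bs, List.length_append, List.length_range']
  omega

lemma bs_get_fst {n x y z : ℕ} (hx : x < y) (hy : y < z) (hz : z ≤ n) :
    (bs n x y z)[x]? = some (y + 1) := by
  unfold bs
  rw [List.getElem?_append_left (by simp only [List.length_append, List.length_range']; omega)]
  rw [List.getElem?_append_left (by simp only [List.length_append, List.length_range']; omega)]
  rw [List.getElem?_append_right (by simp only [List.length_range']; omega)]
  simp only [List.length_range', Nat.sub_self]
  rw [List.getElem?_range' (by omega)]
  all_goals simp

lemma bs_get_snd {n x y z : ℕ} (hx : x < y) (hy : y < z) (hz : z ≤ n) :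
    (bs n x y z)[x + (z - y)]? = some (x + 1) := by
  unfold bs
  rw [List.getElem?_append_left (by simp only [List.length_append, List.length_range']; omega)]
  rw [List.getElem?_append_right (by simp only [List.length_append, List.length_range']; omega)]
  simp only [List.length_append, List.length_range']
  rw [show x + (z - y) - (x + (z - y)) = 0 by omega]
  rw [List.getElem?_range' (by omega)]
  all_goals simp

lemma bs_get_low {n x y z i : ℕ} (hix : i < x) :
    (bs n x y z)[i]? = some (1 + i) := by
  unfold bs
  rw [List.getElem?_append_left (by simp only [List.length_append, List.length_range']; omega)]
  rw [List.getElem?_append_left (by simp only [List.length_append, List.length_range']; omega)]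
  rw [List.getElem?_append_left (by simp only [List.length_range']; omega)]
  rw [List.getElem?_range' (by omega)]
  all_goals simp

lemma bs_get_mid {n x y z j : ℕ} (hx : x < y) (hj : j < z - y) :
    (bs n x y z)[x + j]? = some (y + 1 + j) := by
  unfold bs
  rw [List.getElem?_append_left (by simp only [List.length_append, List.length_range']; omega)]
  rw [List.getElem?_append_left (by simp only [List.length_append, List.length_range']; omega)]
  rw [List.getElem?_append_right (by simp only [List.length_range']; omega)]
  simp only [List.length_range']
  rw [show x + j - x = j by omega]
  rw [List.getElem?_range' (by omega)]
  all_goals simp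

lemma ident_ne_bs {n x y z : ℕ} (hx : x < y) (hy : y < z) (hz : z ≤ n) :
    ident n ≠ bs n x y z := by
  intro h
  have h1 : (ident n)[x]? = some (1 + x) := by
    unfold ident
    rw [List.getElem?_range' (by omega)]
    simp
  have h2 : (bs n x y z)[x]? = some (y + 1) := bs_get_fst hx hy hz
  rw [h, h2] at h1
  simp only [Option.some.injEq] at h1
  omega

lemma bs_inj_aux {n k : ℕ} {x y z x' y' z' : ℕ}
    (h1 : (x,y,z) ∈ Tri n k) (h2 : (x',y',z') ∈ Tri n k)
    (heq : bs n x y z = bs n x' y' z') (hlt : x < x') : False := by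
  rw [mem_Tri] at h1 h2
  obtain ⟨ha1, ha2, ha3, -⟩ := h1
  have e1 : (bs n x y z)[x]? = some (y + 1) := bs_get_fst ha1 ha2 ha3
  have e2 : (bs n x' y' z')[x]? = some (1 + x) := bs_get_low hlt
  rw [heq, e2] at e1
  simp only [Option.some.injEq] at e1
  omega

lemma bs_inj {n k : ℕ} {x y z x' y' z' : ℕ}
    (h1 : (x,y,z) ∈ Tri n k) (h2 : (x',y',z') ∈ Tri n k)
    (heq : bs n x y z = bs n x' y' z') : x = x' ∧ y = y' ∧ z = z' := by
  have hxx : x = x' := by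
    rcases lt_trichotomy x x' with h | h | h
    · exact absurd (bs_inj_aux h1 h2 heq h) (fun f => f)
    · exact h
    · exact absurd (bs_inj_aux h2 h1 heq.symm h) (fun f => f)
  subst hxx
  rw [mem_Tri] at h1 h2
  obtain ⟨ha1, ha2, ha3, -⟩ := h1
  obtain ⟨hb1, hb2, hb3, -⟩ := h2
  have e1 : (bs n x y z)[x]? = some (y + 1) := bs_get_fst ha1 ha2 ha3
  have e2 : (bs n x y' z')[x]? = some (y' + 1) := bs_get_fst hb1 hb2 hb3
  rw [heq, e2] at e1
  simp only [Option.some.injEq] at e1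
  have hyy : y = y' := by omega
  subst hyy
  refine ⟨rfl, rfl, ?_⟩
  by_contra hne
  rcases lt_trichotomy z z' with h | h | h
  · have f1 : (bs n x y z)[x + (z - y)]? = some (x + 1) := bs_get_snd ha1 ha2 ha3
    have f2 : (bs n x y z')[x + (z - y)]? = some (y + 1 + (z - y)) :=
      bs_get_mid hb1 (by omega)
    rw [heq, f2] at f1
    simp only [Option.some.injEq] at f1
    omega
  · exact hne h
  · have f1 : (bs n x y z')[x + (z' - y)]? = some (x + 1) := bs_get_snd hb1 hb2 hb3
    have f2 : (bs n x y z)[x + (z' - y)]? = some (y + 1 + (z' - y)) :=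
      bs_get_mid ha1 (by omega)
    rw [← heq, f2] at f1
    simp only [Option.some.injEq] at f1
    omega

lemma main_set_eq {n k : ℕ} (hk : 2 ≤ k) (hkn : k ≤ n) :
    SOutK k (ident n) ∩ SInK k (ident n) =
      ↑(insert (ident n) ((Tri n k).image (fun t => bs n t.1 t.2.1 t.2.2))) := by
  ext ρ
  simp only [Finset.coe_insert, Set.mem_insert_iff, Finset.coe_image, Set.mem_image,
    Finset.mem_coe]
  constructor
  · intro h
    rcases forward hk hkn h with h | ⟨x, y, z, h1, h2, h3, h4, h5⟩
    · exact Or.inl h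
    · exact Or.inr ⟨(x, y, z), mem_Tri.2 ⟨h1, h2, h3, h4⟩, h5.symm⟩
  · rintro (rfl | ⟨⟨x, y, z⟩, ht, rfl⟩)
    · exact ident_mem (by omega) hkn
    · rw [mem_Tri] at ht
      exact bs_mem hk hkn ht.1 ht.2.1 ht.2.2.1 ht.2.2.2

end Stmt12

theorem stmt_12 (n k : ℕ) (hk : 2 ≤ k) (hkn : k ≤ n) :
    (SOutK k (ident n) ∩ SInK k (ident n)).ncard =
      (n - k + 1) * k.choose 2 + k.choose 3 + 1 := by
  rw [Stmt12.main_set_eq hk hkn, Set.ncard_coe_finset]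
  rw [Finset.card_insert_of_notMem, Finset.card_image_of_injOn, Stmt12.card_Tri n k hk hkn]
  · rintro ⟨x, y, z⟩ h1 ⟨x', y', z'⟩ h2 heq
    have := Stmt12.bs_inj h1 h2 heq
    simp only [Prod.mk.injEq]
    exact ⟨this.1, this.2.1, this.2.2⟩
  · intro hmem
    rw [Finset.mem_image] at hmem
    obtain ⟨⟨x, y, z⟩, ht, heq⟩ := hmem
    rw [Stmt12.mem_Tri] at ht
    exact Stmt12.ident_ne_bs ht.1 ht.2.1 ht.2.2.1 heq.symm
end

section
/- For every n ≥ 1 and every b ∈ {0,1}^{n−1}, the MTDRL operations with patterns b·1 and b·0 (differing only in the last bit) produce the same permutation when applied to any permutation π of {1,…,n}; moreover, distinct patterns of the form b·1 applied to the identity produce distinct permutations. -/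
lemma mtdrl_cons_true (t : List Bool) (a : ℕ) (l : List ℕ) :
    mtdrl (true::t) (a::l) = a :: mtdrl t l := by
  simp [mtdrl]

lemma mtdrl_cons_false (t : List Bool) (a : ℕ) (l : List ℕ) :
    mtdrl (false::t) (a::l) = mtdrl t l ++ [a] := by
  simp [mtdrl]

lemma mtdrl_length (b : List Bool) (l : List ℕ) :
    (mtdrl b l).length = (l.zip b).length := by
  simp only [mtdrl, List.length_append, List.length_map, List.length_reverse]
  have h1 := List.length_eq_length_filter_add (l := l.zip b) (fun p => p.2)
  omega

lemma mtdrl_mem {b : List Bool} {l : List ℕ} {x : ℕ} (h : x ∈ mtdrl b l) : x ∈ l := by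
  rcases List.mem_append.1 h with h' | h'
  · obtain ⟨⟨y, c⟩, hc, rfl⟩ := List.mem_map.1 h'
    exact (List.of_mem_zip (List.mem_of_mem_filter hc)).1
  · rw [List.mem_reverse] at h'
    obtain ⟨⟨y, c⟩, hc, rfl⟩ := List.mem_map.1 h'
    exact (List.of_mem_zip (List.mem_of_mem_filter hc)).1

lemma mtdrl_last_eq (b : List Bool) (l : List ℕ) (a : ℕ) (h : b.length = l.length) :
    mtdrl (b ++ [true]) (l ++ [a]) = mtdrl (b ++ [false]) (l ++ [a]) := by
  simp [mtdrl, List.zip_append h.symm, List.filter_append]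

lemma inj_aux : ∀ (l : List ℕ) (a : ℕ), List.Pairwise (· < ·) (a::l) →
    ∀ b b' : List Bool, b.length = l.length → b'.length = l.length →
    mtdrl (b++[true]) (a::l) = mtdrl (b'++[true]) (a::l) → b = b' := by
  intro l
  induction l with
  | nil =>
    intro a _ b b' hb hb' _
    rw [List.length_nil, List.length_eq_zero_iff] at hb hb'
    rw [hb, hb']
  | cons x l ih =>
    intro a hs b b' hb hb' heq
    cases b with
    | nil => simp at hb
    | cons b0 t =>
    cases b' with
    | nil => simp at hb'
    | cons b0' t' =>
    simp only [List.length_cons, Nat.succ.injEq] at hb hb'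
    obtain ⟨ha, hs'⟩ := List.pairwise_cons.1 hs
    have hlen : ∀ u : List Bool, u.length = l.length →
        mtdrl (u ++ [true]) (x::l) ≠ [] := by
      intro u hu h
      have := mtdrl_length (u ++ [true]) (x::l)
      rw [h] at this
      simp [List.length_zip, hu] at this
    have hmem : ∀ u : List Bool, u.length = l.length →
        ∀ y, mtdrl (u ++ [true]) (x::l) = y :: (mtdrl (u ++ [true]) (x::l)).tail → a < y := by
      intro u hu y hy
      apply ha
      apply mtdrl_mem (b := u ++ [true]) (l := x::l)
      rw [hy]; exact List.mem_cons_self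
    cases b0 <;> cases b0' <;>
      simp only [List.cons_append, mtdrl_cons_true, mtdrl_cons_false] at heq
    · -- false false
      rw [List.append_cancel_right_eq] at heq
      rw [ih x hs' t t' hb hb' heq]
    · -- false true
      obtain ⟨y, r, hyr⟩ := List.exists_cons_of_ne_nil (hlen t hb)
      rw [hyr] at heq
      have : a < y := by
        apply ha; apply mtdrl_mem (b := t ++ [true]) (l := x::l)
        rw [hyr]; exact List.mem_cons_self
      rw [List.cons_append] at heq
      have : a = y := by
        have := congrArg (fun s => s.headI) heq
        simpa using this.symm
      omega
    · -- true false
      obtain ⟨y, r, hyr⟩ := List.exists_cons_of_ne_nil (hlen t' hb')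
      rw [hyr] at heq
      have h1 : a < y := by
        apply ha; apply mtdrl_mem (b := t' ++ [true]) (l := x::l)
        rw [hyr]; exact List.mem_cons_self
      rw [List.cons_append] at heq
      have : a = y := by
        have := congrArg (fun s => s.headI) heq
        simpa using this
      omega
    · -- true true
      rw [List.cons_inj_right] at heq
      rw [ih x hs' t t' hb hb' heq]

theorem stmt_15 (n : ℕ) (hn : 1 ≤ n) :
    (∀ π : List ℕ, IsPermOf n π → ∀ b : List Bool, b.length = n - 1 →
      mtdrl (b ++ [true]) π = mtdrl (b ++ [false]) π) ∧
    (∀ b b' : List Bool, b.length = n - 1 → b'.length = n - 1 →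
      mtdrl (b ++ [true]) (ident n) = mtdrl (b' ++ [true]) (ident n) → b = b') := by
  obtain ⟨m, rfl⟩ : ∃ m, n = m + 1 := ⟨n - 1, (Nat.succ_pred_eq_of_pos hn).symm⟩
  constructor
  · intro π hπ b hb
    have hπl : π.length = m + 1 := by
      rw [hπ.length_eq]; simp [ident]
    have hne : π ≠ [] := by intro h; rw [h] at hπl; simp at hπl
    obtain ⟨l, a, rfl⟩ : ∃ l a, π = l ++ [a] :=
      ⟨π.dropLast, π.getLast hne, (List.dropLast_append_getLast hne).symm⟩
    apply mtdrl_last_eq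
    have : l.length + 1 = m + 1 := by simpa using hπl
    simp at hb; omega
  · intro b b' hb hb' heq
    have hid : ident (m + 1) = 1 :: List.range' 2 m := by
      rw [ident, List.range'_succ]
    have hsort : List.Pairwise (· < ·) (1 :: List.range' 2 m) := by
      have := List.pairwise_lt_range' (s := 1) (n := m + 1)
      rw [List.range'_succ] at this
      exact this
    rw [hid] at heq
    exact inj_aux _ 1 hsort b b' (by simpa using hb) (by simpa using hb') heq
end
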